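/- arXiv:2109.09441 — 6 statements merged into one kernel-verified Lean document; each statement's English description precedes it below -/
import Mathlib

section
/- For x ∈ ℝⁿ with x ≠ 0 and 0 < λ < |x|, for every z ∈ ℝⁿ with |z - x| > λ, we have λ²|z| / (|z-x|² · |x + λ²(z-x)/|z-x|²|) < 1. -/
/-- For `x ≠ 0`, `0 < λ < |x|` and `|z - x| > λ`, the quantity
`λ²|z| / (|z-x|² · |x + λ²(z-x)/|z-x|²|)` is less than `1`. -/
theorem sphere_inversion_ratio_lt_one (n : ℕ) (x z : EuclideanSpace ℝ (Fin n)) (l : ℝ)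
    (hx : x ≠ 0) (hl : 0 < l) (hlx : l < ‖x‖) (hz : l < ‖z - x‖) :
    l ^ 2 * ‖z‖ / (‖z - x‖ ^ 2 * ‖x + (l ^ 2 / ‖z - x‖ ^ 2) • (z - x)‖) < 1 := by
  have hr : (0:ℝ) < ‖z - x‖ := lt_trans hl hz
  have hxn : (0:ℝ) < ‖x‖ := norm_pos_iff.mpr hx
  have hs : |(inner ℝ x (z - x) : ℝ)| ≤ ‖x‖ * ‖z - x‖ := abs_real_inner_le_norm x (z - x)
  have key : l ^ 2 * ‖z‖ < ‖z - x‖ ^ 2 * ‖x + (l ^ 2 / ‖z - x‖ ^ 2) • (z - x)‖ := by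
    have h1 : (‖z - x‖ ^ 2) • (x + (l ^ 2 / ‖z - x‖ ^ 2) • (z - x))
        = (‖z - x‖ ^ 2) • x + (l ^ 2) • (z - x) := by
      rw [smul_add, smul_smul]
      congr 2
      field_simp
    apply lt_of_pow_lt_pow_left₀ 2 (by positivity)
    have e1 : (‖z - x‖ ^ 2 * ‖x + (l ^ 2 / ‖z - x‖ ^ 2) • (z - x)‖) ^ 2
        = ‖(‖z - x‖ ^ 2) • x + (l ^ 2) • (z - x)‖ ^ 2 := by
      rw [← h1, norm_smul]
      rw [Real.norm_of_nonneg (by positivity : (0:ℝ) ≤ ‖z - x‖ ^ 2)]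
    have e2 : (l ^ 2 * ‖z‖) ^ 2 = ‖(l ^ 2) • x + (l ^ 2) • (z - x)‖ ^ 2 := by
      rw [← smul_add]
      have hzz : x + (z - x) = z := by abel
      rw [hzz, norm_smul, Real.norm_of_nonneg (by positivity : (0:ℝ) ≤ l ^ 2)]
    rw [e1, e2]
    rw [norm_add_sq_real, norm_add_sq_real]
    simp only [norm_smul, real_inner_smul_left, real_inner_smul_right, Real.norm_eq_abs,
      abs_of_pos (show (0:ℝ) < l ^ 2 by positivity),
      abs_of_pos (show (0:ℝ) < ‖z - x‖ ^ 2 by positivity), mul_pow]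
    have habs := abs_le.mp hs
    have hrl : (0:ℝ) < ‖z - x‖ ^ 2 - l ^ 2 := by nlinarith
    have h2 : (0:ℝ) ≤ (inner ℝ x (z - x) : ℝ) + ‖x‖ * ‖z - x‖ := by linarith [habs.1]
    have h3 : (0:ℝ) < (‖z - x‖ ^ 2 + l ^ 2) * ‖x‖ - 2 * l ^ 2 * ‖z - x‖ := by
      nlinarith [mul_pos hl (mul_pos (sub_pos.mpr hz) (sub_pos.mpr hz)), sub_pos.mpr hlx,
        mul_pos (sub_pos.mpr hlx) (mul_pos hr hr), mul_pos (sub_pos.mpr hlx) (mul_pos hl hl)]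
    nlinarith [mul_nonneg (mul_nonneg hrl.le (by positivity : (0:ℝ) ≤ 2 * l ^ 2)) h2,
      mul_pos hrl (mul_pos hxn h3)]
  rw [div_lt_one (lt_of_le_of_lt (by positivity) key)]
  exact key
end

section
/- Let n ≥ 1, σ ∈ (0, n/2), α < 2σ, p > 0. Suppose u : ℝⁿ → ℝ is continuous, positive, and satisfies u(x) = ∫_{ℝⁿ} u(y)^p |y|^{-α} |x - y|^{-(n-2σ)} dy for all x. Then liminf_{|x|→∞} |x|^{n-2σ} u(x) ≥ ∫_{ℝⁿ} u(y)^p |y|^{-α} dy > 0. -/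
open MeasureTheory Filter Metric Set
open scoped ENNReal NNReal


lemma aux_ball (n : ℕ) (hn : 1 ≤ n) (β : ℝ) (hβ0 : 0 < β) (hβn : β < n) :
    ∃ K : ℝ≥0∞, K ≠ ⊤ ∧ ∀ (y : EuclideanSpace ℝ (Fin n)) (R : ℝ), 0 < R →
      ∫⁻ x in Metric.closedBall y R, ENNReal.ofReal (‖x - y‖ ^ (-β)) ≤
        K * ENNReal.ofReal (R ^ ((n : ℝ) - β)) := by
  classical
  haveI : Nonempty (Fin n) := ⟨⟨0, hn⟩⟩
  set E := EuclideanSpace ℝ (Fin n)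
  haveI : Nontrivial E := inferInstance
  set v : ℝ≥0∞ := volume (ball (0 : E) 1) with hv
  have hvfin : v ≠ ⊤ := measure_ball_lt_top.ne
  set q : ℝ := (2 : ℝ) ^ (β - (n : ℝ)) with hqdef
  have hq0 : 0 < q := Real.rpow_pos_of_pos two_pos _
  have hq1 : q < 1 := by
    apply Real.rpow_lt_one_of_one_lt_of_neg one_lt_two (by linarith)
  have hq1' : ENNReal.ofReal q < 1 := by
    rw [← ENNReal.ofReal_one]
    exact ENNReal.ofReal_lt_ofReal_iff_of_nonneg hq0.le |>.mpr hq1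
  refine ⟨(ENNReal.ofReal ((2:ℝ) ^ β) * v) * (1 - ENNReal.ofReal q)⁻¹, ?_, ?_⟩
  · refine ENNReal.mul_ne_top (ENNReal.mul_ne_top ENNReal.ofReal_ne_top hvfin) ?_
    rw [ENNReal.inv_ne_top]
    simpa [tsub_eq_zero_iff_le] using LT.lt.not_ge hq1'
  intro y R hR
  set a : ℝ := (2:ℝ)⁻¹ with ha
  have ha0 : 0 < a := by norm_num [ha]
  have ha1 : a < 1 := by norm_num [ha]
  set ρ : ℕ → ℝ := fun j => a ^ j * R with hρ
  have hρ0 : ∀ j, 0 < ρ j := fun j => mul_pos (pow_pos ha0 j) hR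
  set S : ℕ → Set E := fun j => closedBall y (ρ j) \ closedBall y (ρ (j+1)) with hS
  -- covering
  have hcov : closedBall y R \ {y} ⊆ ⋃ j, S j := by
    intro x hx
    obtain ⟨hx1, hx2⟩ := hx
    have hd0 : 0 < dist x y := dist_pos.2 (by simpa using hx2)
    have htend : Tendsto (fun j : ℕ => ρ (j+1)) atTop (nhds 0) := by
      have : Tendsto (fun j : ℕ => a ^ j) atTop (nhds 0) :=
        tendsto_pow_atTop_nhds_zero_of_lt_one ha0.le ha1
      have := ((this.comp (tendsto_add_atTop_nat 1)).mul_const R)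
      simpa [hρ] using this
    have hex : ∃ j, ρ (j+1) < dist x y :=
      ((htend.eventually (eventually_lt_nhds hd0)).exists)
    let j := Nat.find hex
    refine mem_iUnion.2 ⟨j, ?_, ?_⟩
    · -- dist x y ≤ ρ j
      rcases Nat.eq_zero_or_pos j with hj | hj
      · rw [mem_closedBall, hj]
        simpa [hρ] using hx1
      · obtain ⟨k, hk⟩ := Nat.exists_eq_succ_of_ne_zero hj.ne'
        have := Nat.find_min hex (m := k) (by omega)
        rw [mem_closedBall, hk]
        push_neg at this
        simpa using this
    · simp only [mem_closedBall, not_le]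
      exact Nat.find_spec hex
  -- reduce to union
  have hmeas : ∀ j, MeasurableSet (S j) :=
    fun j => measurableSet_closedBall.diff measurableSet_closedBall
  have hstep : (∫⁻ x in closedBall y R, ENNReal.ofReal (‖x - y‖ ^ (-β))) =
      ∫⁻ x in closedBall y R \ {y}, ENNReal.ofReal (‖x - y‖ ^ (-β)) := by
    refine (setLIntegral_congr ?_).symm
    exact diff_ae_eq_self.2 (measure_mono_null inter_subset_right (measure_singleton y))
  rw [hstep]
  calc ∫⁻ x in closedBall y R \ {y}, ENNReal.ofReal (‖x - y‖ ^ (-β))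
      ≤ ∫⁻ x in ⋃ j, S j, ENNReal.ofReal (‖x - y‖ ^ (-β)) := lintegral_mono_set hcov
    _ ≤ ∑' j, ∫⁻ x in S j, ENNReal.ofReal (‖x - y‖ ^ (-β)) := lintegral_iUnion_le _ _
    _ ≤ ∑' j, (ENNReal.ofReal ((2:ℝ) ^ β) * v * ENNReal.ofReal (R ^ ((n:ℝ) - β)))
          * ENNReal.ofReal q ^ j := by
        refine ENNReal.tsum_le_tsum fun j => ?_
        have h2 : ∀ k : ℕ, (a:ℝ) ^ k = (2:ℝ) ^ (-(k:ℝ)) := by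
          intro k
          rw [ha, inv_pow, ← Real.rpow_natCast 2 k, ← Real.rpow_neg (by norm_num)]
        have e1 : (ρ (j+1)) ^ (-β) = (2:ℝ) ^ (((j:ℝ)+1)*β) * R ^ (-β) := by
          rw [hρ]
          simp only [h2 (j+1)]
          rw [Real.mul_rpow (Real.rpow_nonneg two_pos.le _) hR.le,
            ← Real.rpow_mul two_pos.le]
          have : (-((j:ℕ)+1 : ℕ):ℝ) * (-β) = ((j:ℝ)+1)*β := by push_cast; ring
          rw [this]
        have e2 : (ρ j) ^ (n:ℕ) = (2:ℝ) ^ (-(j:ℝ)*(n:ℝ)) * R ^ ((n:ℝ)) := by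
          rw [hρ]
          simp only [h2 j]
          rw [mul_pow, ← Real.rpow_natCast ((2:ℝ) ^ (-(j:ℝ))) n,
            ← Real.rpow_mul two_pos.le, ← Real.rpow_natCast R n]
        have hq : q ^ j = (2:ℝ) ^ ((β - (n:ℝ)) * (j:ℝ)) := by
          rw [hqdef, ← Real.rpow_natCast ((2:ℝ)^(β - (n:ℝ))) j,
            ← Real.rpow_mul (by norm_num)]
        have key : (ρ (j+1)) ^ (-β) * (ρ j) ^ (n:ℕ)
            = (2:ℝ)^β * R ^ ((n:ℝ) - β) * q ^ j := by
          rw [e1, e2, hq, mul_mul_mul_comm, ← Real.rpow_add two_pos, ← Real.rpow_add hR]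
          conv_rhs => rw [mul_right_comm]
          rw [← Real.rpow_add two_pos]
          congr 1
          · congr 1
            push_cast
            ring
          · congr 1
            ring
        have h1 : ∀ x ∈ S j, ENNReal.ofReal (‖x - y‖ ^ (-β)) ≤
            ENNReal.ofReal ((ρ (j+1)) ^ (-β)) := by
          intro x hx
          refine ENNReal.ofReal_le_ofReal ?_
          have hd : ρ (j+1) < ‖x - y‖ := by
            have := hx.2
            rw [mem_closedBall, not_le, dist_eq_norm] at this
            exact this
          exact Real.rpow_le_rpow_of_nonpos (hρ0 (j+1)) hd.le (neg_nonpos.2 hβ0.le)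
        calc ∫⁻ x in S j, ENNReal.ofReal (‖x - y‖ ^ (-β))
            ≤ ∫⁻ _x in S j, ENNReal.ofReal ((ρ (j+1)) ^ (-β)) :=
              setLIntegral_mono' (hmeas j) h1
          _ = ENNReal.ofReal ((ρ (j+1)) ^ (-β)) * volume (S j) := setLIntegral_const _ _
          _ ≤ ENNReal.ofReal ((ρ (j+1)) ^ (-β)) *
              (ENNReal.ofReal ((ρ j) ^ (n:ℕ)) * v) := by
              refine mul_le_mul_right ?_ _
              calc volume (S j) ≤ volume (closedBall y (ρ j)) :=
                    measure_mono diff_subset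
                _ = ENNReal.ofReal ((ρ j) ^ (n:ℕ)) * v := by
                    rw [Measure.addHaar_closedBall _ _ (hρ0 j).le]
                    rw [finrank_euclideanSpace_fin (𝕜 := ℝ)]
          _ = ENNReal.ofReal ((ρ (j+1)) ^ (-β) * (ρ j) ^ (n:ℕ)) * v := by
              rw [ENNReal.ofReal_mul (Real.rpow_nonneg (hρ0 _).le _), mul_assoc]
          _ = ENNReal.ofReal ((2:ℝ)^β * R ^ ((n:ℝ) - β) * q ^ j) * v := by rw [key]
          _ = (ENNReal.ofReal ((2:ℝ) ^ β) * v * ENNReal.ofReal (R ^ ((n:ℝ) - β)))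
              * ENNReal.ofReal q ^ j := by
              rw [ENNReal.ofReal_mul (by positivity), ENNReal.ofReal_mul (by positivity),
                ENNReal.ofReal_pow hq0.le]
              ring
    _ = (ENNReal.ofReal ((2:ℝ) ^ β) * v) * (1 - ENNReal.ofReal q)⁻¹
          * ENNReal.ofReal (R ^ ((n : ℝ) - β)) := by
        rw [ENNReal.tsum_mul_left, ENNReal.tsum_geometric]
        ring

lemma aux_annulus (n : ℕ) (hn : 1 ≤ n) (β : ℝ) (hβ0 : 0 < β) (hβn : β < n) :
    ∃ K : ℝ≥0∞, K ≠ ⊤ ∧ ∀ (y : EuclideanSpace ℝ (Fin n)) (R : ℝ), 0 < R →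
      ∫⁻ x in Metric.closedBall (0 : EuclideanSpace ℝ (Fin n)) (2*R) \ Metric.closedBall 0 R,
          ENNReal.ofReal (‖x - y‖ ^ (-β)) ≤
        K * ENNReal.ofReal (R ^ ((n : ℝ) - β)) := by
  classical
  haveI : Nonempty (Fin n) := ⟨⟨0, hn⟩⟩
  set E := EuclideanSpace ℝ (Fin n)
  obtain ⟨K₁, hK₁top, hK₁⟩ := aux_ball n hn β hβ0 hβn
  set v : ℝ≥0∞ := volume (ball (0 : E) 1) with hv
  have hvfin : v ≠ ⊤ := measure_ball_lt_top.ne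
  refine ⟨K₁ + ENNReal.ofReal ((2:ℝ)^(n:ℕ)) * v, by
    exact ENNReal.add_ne_top.2 ⟨hK₁top, ENNReal.mul_ne_top ENNReal.ofReal_ne_top hvfin⟩, ?_⟩
  intro y R hR
  set A : Set E := closedBall (0 : E) (2*R) \ closedBall 0 R with hA
  have hAm : MeasurableSet A := measurableSet_closedBall.diff measurableSet_closedBall
  have hsplit : A ⊆ closedBall y R ∪ (A \ closedBall y R) := by
    intro x hx
    by_cases h : x ∈ closedBall y R
    · exact Or.inl h
    · exact Or.inr ⟨hx, h⟩
  calc ∫⁻ x in A, ENNReal.ofReal (‖x - y‖ ^ (-β))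
      ≤ ∫⁻ x in closedBall y R ∪ (A \ closedBall y R),
          ENNReal.ofReal (‖x - y‖ ^ (-β)) := lintegral_mono_set hsplit
    _ ≤ (∫⁻ x in closedBall y R, ENNReal.ofReal (‖x - y‖ ^ (-β)))
        + ∫⁻ x in A \ closedBall y R, ENNReal.ofReal (‖x - y‖ ^ (-β)) :=
        lintegral_union_le _ _ _
    _ ≤ K₁ * ENNReal.ofReal (R ^ ((n : ℝ) - β))
        + ENNReal.ofReal ((2:ℝ)^(n:ℕ)) * v * ENNReal.ofReal (R ^ ((n : ℝ) - β)) := by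
        refine add_le_add (hK₁ y R hR) ?_
        have hbd : ∀ x ∈ A \ closedBall y R,
            ENNReal.ofReal (‖x - y‖ ^ (-β)) ≤ ENNReal.ofReal (R ^ (-β)) := by
          intro x hx
          refine ENNReal.ofReal_le_ofReal ?_
          have hd : R < ‖x - y‖ := by
            have := hx.2
            rw [mem_closedBall, not_le, dist_eq_norm] at this
            exact this
          exact Real.rpow_le_rpow_of_nonpos hR hd.le (neg_nonpos.2 hβ0.le)
        calc ∫⁻ x in A \ closedBall y R, ENNReal.ofReal (‖x - y‖ ^ (-β))
            ≤ ∫⁻ _x in A \ closedBall y R, ENNReal.ofReal (R ^ (-β)) :=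
              setLIntegral_mono' (hAm.diff measurableSet_closedBall) hbd
          _ = ENNReal.ofReal (R ^ (-β)) * volume (A \ closedBall y R) :=
              setLIntegral_const _ _
          _ ≤ ENNReal.ofReal (R ^ (-β)) * (ENNReal.ofReal ((2*R) ^ (n:ℕ)) * v) := by
              refine mul_le_mul_right ?_ _
              calc volume (A \ closedBall y R) ≤ volume (closedBall (0:E) (2*R)) :=
                    measure_mono (diff_subset.trans diff_subset)
                _ = ENNReal.ofReal ((2*R) ^ (n:ℕ)) * v := by
                    rw [Measure.addHaar_closedBall _ _ (by linarith : (0:ℝ) ≤ 2*R)]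
                    rw [finrank_euclideanSpace_fin (𝕜 := ℝ)]
          _ = ENNReal.ofReal (R ^ (-β) * (2*R) ^ (n:ℕ)) * v := by
              rw [ENNReal.ofReal_mul (Real.rpow_nonneg hR.le _), mul_assoc]
          _ = ENNReal.ofReal ((2:ℝ)^(n:ℕ) * R ^ ((n:ℝ) - β)) * v := by
              congr 2
              rw [mul_pow, ← Real.rpow_natCast R n, mul_comm ((2:ℝ)^n) _, ← mul_assoc,
                ← Real.rpow_add hR]
              rw [show -β + (n:ℝ) = (n:ℝ) - β by ring, mul_comm]
          _ = ENNReal.ofReal ((2:ℝ)^(n:ℕ)) * v * ENNReal.ofReal (R ^ ((n:ℝ) - β)) := by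
              rw [ENNReal.ofReal_mul (by positivity)]
              ring
    _ = (K₁ + ENNReal.ofReal ((2:ℝ)^(n:ℕ)) * v) * ENNReal.ofReal (R ^ ((n : ℝ) - β)) := by
        ring

set_option maxHeartbeats 2000000 in
/-- For a continuous positive solution of the integral equation,
`liminf_{|x|→∞} |x|^{n-2σ} u(x) ≥ ∫ u(y)^p |y|^{-α} dy > 0`. -/
theorem liminf_lower_bound (n : ℕ) (hn : 1 ≤ n) (σ α p : ℝ)
    (hσ : 0 < σ) (hσ2 : σ < (n : ℝ) / 2) (hα : α < 2 * σ) (hp : 0 < p)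
    (u : EuclideanSpace ℝ (Fin n) → ℝ) (hc : Continuous u) (hpos : ∀ x, 0 < u x)
    (hint : Integrable (fun y : EuclideanSpace ℝ (Fin n) => u y ^ p * ‖y‖ ^ (-α)))
    (heq : ∀ x, u x = ∫ y, u y ^ p * ‖y‖ ^ (-α) * ‖x - y‖ ^ (-((n : ℝ) - 2 * σ))) :
    (∫ y, u y ^ p * ‖y‖ ^ (-α)) ≤
        liminf (fun x => ‖x‖ ^ ((n : ℝ) - 2 * σ) * u x)
          (comap (fun x : EuclideanSpace ℝ (Fin n) => ‖x‖) atTop) ∧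
      0 < ∫ y, u y ^ p * ‖y‖ ^ (-α) := by
  classical
  haveI : Nonempty (Fin n) := ⟨⟨0, hn⟩⟩
  haveI : Nontrivial (EuclideanSpace ℝ (Fin n)) := inferInstance
  set β : ℝ := (n : ℝ) - 2 * σ with hβ
  have hβ0 : 0 < β := by rw [hβ]; linarith
  have hβn : β < (n : ℝ) := by rw [hβ]; linarith
  set f : EuclideanSpace ℝ (Fin n) → ℝ := fun y => u y ^ p * ‖y‖ ^ (-α) with hf
  have hfnn : ∀ y, 0 ≤ f y := fun y =>
    mul_nonneg (Real.rpow_nonneg (hpos y).le p) (Real.rpow_nonneg (norm_nonneg y) _)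
  set I : ℝ := ∫ y, f y with hIdef
  set l : Filter (EuclideanSpace ℝ (Fin n)) := comap (fun x : EuclideanSpace ℝ (Fin n) => ‖x‖) atTop with hl
  set g : EuclideanSpace ℝ (Fin n) → ℝ := fun x => ‖x‖ ^ β * u x with hg
  have hgnn : ∀ x, 0 ≤ g x :=
    fun x => mul_nonneg (Real.rpow_nonneg (norm_nonneg x) _) (hpos x).le
  -- measurability of f
  have hfm : Measurable f := by
    rw [hf]; fun_prop
  -- positivity of the integral
  have hI : 0 < I := by
    rw [hIdef]
    refine (integral_pos_iff_support_of_nonneg hfnn hint).2 ?_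
    have hsub : ball (0 : EuclideanSpace ℝ (Fin n)) 1 \ {0} ⊆ Function.support f := by
      intro y hy
      have hy0 : y ≠ 0 := by simpa using hy.2
      have : 0 < f y := mul_pos (Real.rpow_pos_of_pos (hpos y) p)
        (Real.rpow_pos_of_pos (norm_pos_iff.2 hy0) _)
      exact this.ne'
    calc (0:ℝ≥0∞) < volume (ball (0 : EuclideanSpace ℝ (Fin n)) 1) :=
          measure_ball_pos _ _ one_pos
      _ = volume (ball (0 : EuclideanSpace ℝ (Fin n)) 1 \ {0}) :=
          (measure_diff_null (measure_singleton _)).symm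
      _ ≤ volume (Function.support f) := measure_mono hsub
  -- pointwise integrability of the kernel integrand
  have hker : ∀ x : EuclideanSpace ℝ (Fin n), Integrable
      (fun y => u y ^ p * ‖y‖ ^ (-α) * ‖x - y‖ ^ (-β)) := by
    intro x
    by_contra hni
    have h0 := heq x
    rw [integral_undef hni] at h0
    exact absurd h0 (hpos x).ne'
  have hkernn : ∀ (x : EuclideanSpace ℝ (Fin n)), (0:(EuclideanSpace ℝ (Fin n))→ℝ) ≤ᵐ[volume] fun y => u y ^ p * ‖y‖ ^ (-α) * ‖x - y‖ ^ (-β) :=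
    fun x => Eventually.of_forall fun y =>
      mul_nonneg (hfnn y) (Real.rpow_nonneg (norm_nonneg _) _)
  -- eventual lower bound
  have h5 : ∀ ε : ℝ, 0 < ε → ε < I → ∀ᶠ x in l, I - ε ≤ g x := by
    intro ε hε hεI
    have hmono : Monotone (fun k : ℕ => closedBall (0 : EuclideanSpace ℝ (Fin n)) k) :=
      fun i j hij => closedBall_subset_closedBall (by exact_mod_cast hij)
    have hunion : (⋃ k : ℕ, closedBall (0 : EuclideanSpace ℝ (Fin n)) k) = univ := by
      ext x
      simp only [mem_iUnion, mem_closedBall, dist_zero_right, mem_univ, iff_true]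
      exact ⟨⌈‖x‖⌉₊, Nat.le_ceil _⟩
    have htd := tendsto_setIntegral_of_monotone (fun k : ℕ => measurableSet_closedBall) hmono
      (by rw [hunion]; exact hint.integrableOn)
    rw [hunion, Measure.restrict_univ] at htd
    obtain ⟨k, hk⟩ := (htd.eventually (eventually_gt_nhds (by linarith : I - ε/2 < I))).exists
    set θ : ℝ := ε / (2 * I) with hθ
    have hθ0 : 0 < θ := div_pos hε (by linarith)
    have hθI : θ * I = ε / 2 := by
      rw [hθ]
      field_simp
    have hθ1 : θ < 1 := by
      rw [hθ, div_lt_one (by linarith)]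
      linarith
    -- the kernel ratio tends to 1
    have hrt : Tendsto (fun t : ℝ => (t / (t + (k:ℝ))) ^ β) atTop (nhds 1) := by
      have ha : Tendsto (fun t : ℝ => t + (k:ℝ)) atTop atTop :=
        tendsto_atTop_add_const_right _ _ tendsto_id
      have hb : Tendsto (fun t : ℝ => ((k:ℝ)) * (t + (k:ℝ))⁻¹) atTop (nhds ((k:ℝ) * 0)) :=
        tendsto_const_nhds.mul ha.inv_tendsto_atTop
      have hc' : Tendsto (fun t : ℝ => 1 - (k:ℝ) * (t + (k:ℝ))⁻¹) atTop (nhds (1 - (k:ℝ)*0)) :=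
        tendsto_const_nhds.sub hb
      rw [mul_zero, sub_zero] at hc'
      have h1 : Tendsto (fun t : ℝ => t / (t + (k:ℝ))) atTop (nhds 1) := by
        refine Tendsto.congr' ?_ hc'
        filter_upwards [eventually_gt_atTop (0:ℝ)] with t ht
        have htk : t + (k:ℝ) > 0 := by positivity
        field_simp
        ring
      have h2 : ContinuousAt (fun s : ℝ => s ^ β) 1 :=
        Real.continuousAt_rpow_const 1 β (Or.inl one_ne_zero)
      have h3 := h2.tendsto.comp h1
      simpa [Function.comp_def, Real.one_rpow] using h3
    obtain ⟨M₀, hM₀⟩ := eventually_atTop.1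
      (hrt.eventually (eventually_gt_nhds (by linarith : 1 - θ < 1)))
    rw [hl]
    refine eventually_comap.2 ?_
    filter_upwards [eventually_ge_atTop (max M₀ ((k:ℝ)+1))] with b hb x hx
    have hxM : max M₀ ((k:ℝ)+1) ≤ ‖x‖ := hx ▸ hb
    have hxk : (k:ℝ) + 1 ≤ ‖x‖ := le_trans (le_max_right _ _) hxM
    have hx0 : 0 < ‖x‖ := by
      have : (0:ℝ) ≤ (k:ℝ) := Nat.cast_nonneg k
      linarith
    have hratio : ∀ y ∈ closedBall (0 : EuclideanSpace ℝ (Fin n)) (k:ℝ),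
        1 - θ ≤ ‖x‖ ^ β * ‖x - y‖ ^ (-β) := by
      intro y hy
      have hyk : ‖y‖ ≤ (k:ℝ) := by simpa [dist_zero_right] using hy
      have hlo : ‖x‖ - ‖y‖ ≤ ‖x - y‖ := norm_sub_norm_le x y
      have hxy1 : 1 ≤ ‖x - y‖ := by linarith
      have hxy0 : 0 < ‖x - y‖ := by linarith
      have hub : ‖x - y‖ ≤ ‖x‖ + (k:ℝ) := (norm_sub_le x y).trans (by linarith)
      have h2 : ‖x‖ / (‖x‖ + (k:ℝ)) ≤ ‖x‖ / ‖x - y‖ := by gcongr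
      calc 1 - θ ≤ (‖x‖ / (‖x‖ + (k:ℝ))) ^ β :=
            (hM₀ ‖x‖ (le_trans (le_max_left _ _) hxM)).le
        _ ≤ (‖x‖ / ‖x - y‖) ^ β := Real.rpow_le_rpow (by positivity) h2 hβ0.le
        _ = ‖x‖ ^ β * ‖x - y‖ ^ (-β) := by
            rw [Real.div_rpow (norm_nonneg _) (norm_nonneg _),
              Real.rpow_neg (norm_nonneg _), div_eq_mul_inv]
    have hint2 : Integrable (fun y => f y * (‖x‖ ^ β * ‖x - y‖ ^ (-β))) := by
      have h := (hker x).const_mul (‖x‖ ^ β)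
      refine h.congr (Eventually.of_forall fun y => ?_)
      simp only [hf]
      ring
    have e0 : g x = ∫ y, f y * (‖x‖ ^ β * ‖x - y‖ ^ (-β)) := by
      show ‖x‖ ^ β * u x = _
      rw [heq x, ← integral_const_mul]
      simp only [hf]
      congr 1
      funext y
      ring
    have c1 : ∫ y in closedBall (0 : EuclideanSpace ℝ (Fin n)) (k:ℝ),
          f y * (‖x‖ ^ β * ‖x - y‖ ^ (-β)) ≤ ∫ y, f y * (‖x‖ ^ β * ‖x - y‖ ^ (-β)) :=
      setIntegral_le_integral hint2 (Eventually.of_forall fun y =>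
        mul_nonneg (hfnn y) (mul_nonneg (Real.rpow_nonneg (norm_nonneg _) _)
          (Real.rpow_nonneg (norm_nonneg _) _)))
    have c2 : ∫ y in closedBall (0 : EuclideanSpace ℝ (Fin n)) (k:ℝ), (1 - θ) * f y ≤
        ∫ y in closedBall (0 : EuclideanSpace ℝ (Fin n)) (k:ℝ),
          f y * (‖x‖ ^ β * ‖x - y‖ ^ (-β)) := by
      refine setIntegral_mono_on ((hint.const_mul (1-θ)).integrableOn)
        hint2.integrableOn measurableSet_closedBall (fun y hy => ?_)
      rw [mul_comm]
      exact mul_le_mul_of_nonneg_left (hratio y hy) (hfnn y)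
    have c3 : ∫ y in closedBall (0 : EuclideanSpace ℝ (Fin n)) (k:ℝ), (1 - θ) * f y
        = (1-θ) * ∫ y in closedBall (0 : EuclideanSpace ℝ (Fin n)) (k:ℝ), f y :=
      integral_const_mul _ _
    have c4 : (1-θ) * (I - ε/2) ≤
        (1-θ) * ∫ y in closedBall (0 : EuclideanSpace ℝ (Fin n)) (k:ℝ), f y :=
      mul_le_mul_of_nonneg_left hk.le (by linarith)
    have c5 : I - ε ≤ (1-θ) * (I - ε/2) := by nlinarith [mul_nonneg hθ0.le hε.le]
    rw [e0]
    linarith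
  -- cobounded
  have hco : IsCoboundedUnder (· ≥ ·) l g := by
    obtain ⟨K, hKtop, hK⟩ := aux_annulus n hn β hβ0 hβn
    set F : EuclideanSpace ℝ (Fin n) → ℝ≥0∞ := fun y => ENNReal.ofReal (f y) with hF
    have hFm : Measurable F := hfm.ennreal_ofReal
    set J : ℝ≥0∞ := ENNReal.ofReal I with hJdef
    have hJ : ∫⁻ y, F y = J := by
      rw [hJdef, hIdef]
      exact (ofReal_integral_eq_lintegral_ofReal hint (Eventually.of_forall hfnn)).symm
    have hJtop : J ≠ ⊤ := ENNReal.ofReal_ne_top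
    set v : ℝ≥0∞ := volume (ball (0 : EuclideanSpace ℝ (Fin n)) 1) with hv
    have hv0 : v ≠ 0 := (measure_ball_pos _ _ one_pos).ne'
    have hvtop : v ≠ ⊤ := measure_ball_lt_top.ne
    set D : ℝ≥0∞ := ENNReal.ofReal ((2:ℝ) ^ β) * K * J with hD
    have hDtop : D ≠ ⊤ :=
      ENNReal.mul_ne_top (ENNReal.mul_ne_top ENNReal.ofReal_ne_top hKtop) hJtop
    set C0 : ℝ≥0∞ := 2 * (D + 1) * v⁻¹ with hC0
    have hC0top : C0 ≠ ⊤ := by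
      refine ENNReal.mul_ne_top (ENNReal.mul_ne_top ?_ ?_) (ENNReal.inv_ne_top.2 hv0)
      · exact ENNReal.ofNat_ne_top
      · exact ENNReal.add_ne_top.2 ⟨hDtop, ENNReal.one_ne_top⟩
    -- kernel measurability
    have hkm1 : ∀ y : EuclideanSpace ℝ (Fin n),
        Measurable fun x : EuclideanSpace ℝ (Fin n) =>
          ENNReal.ofReal (‖x - y‖ ^ (-β)) := by
      intro y
      fun_prop
    -- in every annulus there is a point with small `g`
    have hex : ∀ R : ℝ, 0 < R → ∃ x : EuclideanSpace ℝ (Fin n),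
        R < ‖x‖ ∧ g x ≤ C0.toReal := by
      intro R hR
      set A : Set (EuclideanSpace ℝ (Fin n)) :=
        closedBall 0 (2*R) \ closedBall 0 R with hA
      have hAm : MeasurableSet A := measurableSet_closedBall.diff measurableSet_closedBall
      by_contra hcon
      push_neg at hcon
      have hconA : ∀ x ∈ A, C0 ≤ ENNReal.ofReal (g x) := by
        intro x hxA
        have hxR : R < ‖x‖ := by
          have := hxA.2
          rw [mem_closedBall, not_le, dist_zero_right] at this
          exact this
        have := hcon x hxR
        rw [← ENNReal.ofReal_toReal hC0top]
        exact ENNReal.ofReal_le_ofReal this.le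
      set W : ℝ≥0∞ := ENNReal.ofReal (R ^ ((n:ℝ))) with hW
      have hW0 : W ≠ 0 := by
        rw [hW]
        simp only [ne_eq, ENNReal.ofReal_eq_zero, not_le]
        positivity
      have hWtop : W ≠ ⊤ := ENNReal.ofReal_ne_top
      -- pointwise representation of u as a lintegral
      have hux : ∀ x : EuclideanSpace ℝ (Fin n), ENNReal.ofReal (u x)
          = ∫⁻ y, F y * ENNReal.ofReal (‖x - y‖ ^ (-β)) := by
        intro x
        have h1 : ENNReal.ofReal (u x)
            = ∫⁻ y, ENNReal.ofReal (u y ^ p * ‖y‖ ^ (-α) * ‖x - y‖ ^ (-β)) := by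
          rw [heq x]
          exact ofReal_integral_eq_lintegral_ofReal (hker x) (hkernn x)
        rw [h1]
        congr 1
        funext y
        rw [ENNReal.ofReal_mul (mul_nonneg (Real.rpow_nonneg (hpos y).le p)
          (Real.rpow_nonneg (norm_nonneg y) _))]
      -- upper bound for the averaged integral of u over A
      have hupA : ∫⁻ x in A, ENNReal.ofReal (u x) ≤ K * ENNReal.ofReal (R ^ ((n:ℝ) - β)) * J := by
        have hswap : ∫⁻ x in A, ∫⁻ y, F y * ENNReal.ofReal (‖x - y‖ ^ (-β))
            = ∫⁻ y, ∫⁻ x in A, F y * ENNReal.ofReal (‖x - y‖ ^ (-β)) := by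
          refine lintegral_lintegral_swap ?_
          refine Measurable.aemeasurable ?_
          have : Measurable fun q : EuclideanSpace ℝ (Fin n) × EuclideanSpace ℝ (Fin n) =>
              F q.2 * ENNReal.ofReal (‖q.1 - q.2‖ ^ (-β)) := by
            refine (hFm.comp measurable_snd).mul ?_
            fun_prop
          exact this
        calc ∫⁻ x in A, ENNReal.ofReal (u x)
            = ∫⁻ x in A, ∫⁻ y, F y * ENNReal.ofReal (‖x - y‖ ^ (-β)) := by
              refine setLIntegral_congr_fun hAm (fun x _ => hux x)
          _ = ∫⁻ y, ∫⁻ x in A, F y * ENNReal.ofReal (‖x - y‖ ^ (-β)) := hswap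
          _ ≤ ∫⁻ y, F y * (K * ENNReal.ofReal (R ^ ((n:ℝ) - β))) := by
              refine lintegral_mono fun y => ?_
              rw [lintegral_const_mul _ (hkm1 y)]
              exact mul_le_mul_right (hK y R hR) _
          _ = (∫⁻ y, F y) * (K * ENNReal.ofReal (R ^ ((n:ℝ) - β))) :=
              lintegral_mul_const _ hFm
          _ = K * ENNReal.ofReal (R ^ ((n:ℝ) - β)) * J := by rw [hJ]; ring
      -- upper bound for the integral of g over A
      have hupg : ∫⁻ x in A, ENNReal.ofReal (g x) ≤ D * W := by
        have hpt : ∀ x ∈ A, ENNReal.ofReal (g x)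
            ≤ ENNReal.ofReal ((2*R) ^ β) * ENNReal.ofReal (u x) := by
          intro x hxA
          have hx2R : ‖x‖ ≤ 2*R := by
            have := hxA.1
            rwa [mem_closedBall, dist_zero_right] at this
          have : g x ≤ (2*R) ^ β * u x := by
            have h1 : ‖x‖ ^ β ≤ (2*R) ^ β :=
              Real.rpow_le_rpow (norm_nonneg _) hx2R hβ0.le
            exact mul_le_mul_of_nonneg_right h1 (hpos x).le
          calc ENNReal.ofReal (g x) ≤ ENNReal.ofReal ((2*R) ^ β * u x) :=
                ENNReal.ofReal_le_ofReal this
            _ = ENNReal.ofReal ((2*R) ^ β) * ENNReal.ofReal (u x) :=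
                ENNReal.ofReal_mul (Real.rpow_nonneg (by linarith) _)
        calc ∫⁻ x in A, ENNReal.ofReal (g x)
            ≤ ∫⁻ x in A, ENNReal.ofReal ((2*R) ^ β) * ENNReal.ofReal (u x) :=
              setLIntegral_mono' hAm hpt
          _ = ENNReal.ofReal ((2*R) ^ β) * ∫⁻ x in A, ENNReal.ofReal (u x) :=
              lintegral_const_mul' _ _ ENNReal.ofReal_ne_top
          _ ≤ ENNReal.ofReal ((2*R) ^ β) * (K * ENNReal.ofReal (R ^ ((n:ℝ) - β)) * J) :=
              mul_le_mul_right hupA _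
          _ = D * W := by
              rw [hD, hW]
              rw [Real.mul_rpow (by norm_num) hR.le,
                ENNReal.ofReal_mul (Real.rpow_nonneg (by norm_num) _)]
              rw [show ENNReal.ofReal ((2:ℝ) ^ β) * ENNReal.ofReal (R ^ β) *
                  (K * ENNReal.ofReal (R ^ ((n:ℝ) - β)) * J)
                = ENNReal.ofReal ((2:ℝ) ^ β) * K * J *
                  (ENNReal.ofReal (R ^ β) * ENNReal.ofReal (R ^ ((n:ℝ) - β))) by ring]
              congr 1
              rw [← ENNReal.ofReal_mul (Real.rpow_nonneg hR.le _), ← Real.rpow_add hR]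
              norm_num
      -- lower bound for the measure of A
      have hWv : W * v ≤ volume A := by
        have h2R : volume (closedBall (0 : EuclideanSpace ℝ (Fin n)) (2*R))
            = ENNReal.ofReal ((2*R) ^ (n:ℕ)) * v := by
          rw [Measure.addHaar_closedBall _ _ (by linarith : (0:ℝ) ≤ 2*R)]
          rw [finrank_euclideanSpace_fin (𝕜 := ℝ)]
        have hRn : volume (closedBall (0 : EuclideanSpace ℝ (Fin n)) R)
            = ENNReal.ofReal (R ^ (n:ℕ)) * v := by
          rw [Measure.addHaar_closedBall _ _ hR.le]
          rw [finrank_euclideanSpace_fin (𝕜 := ℝ)]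
        have hpow : (2:ℝ) * R ^ (n:ℕ) ≤ (2*R) ^ (n:ℕ) := by
          rw [mul_pow]
          have h2n : (2:ℝ) ≤ 2 ^ (n:ℕ) := by
            calc (2:ℝ) = 2 ^ (1:ℕ) := (pow_one 2).symm
            _ ≤ 2 ^ (n:ℕ) := pow_le_pow_right₀ one_le_two hn
          have hRn0 : (0:ℝ) ≤ R ^ (n:ℕ) := by positivity
          exact mul_le_mul_of_nonneg_right h2n hRn0
        have hm : W * v = ENNReal.ofReal (R ^ (n:ℕ)) * v := by
          rw [hW, ← Real.rpow_natCast R n]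
        calc W * v = ENNReal.ofReal (R ^ (n:ℕ)) * v := hm
          _ = 2 * (ENNReal.ofReal (R ^ (n:ℕ)) * v) - ENNReal.ofReal (R ^ (n:ℕ)) * v := by
              rw [two_mul, ENNReal.add_sub_cancel_right
                (ENNReal.mul_ne_top ENNReal.ofReal_ne_top hvtop)]
          _ ≤ ENNReal.ofReal ((2*R) ^ (n:ℕ)) * v - ENNReal.ofReal (R ^ (n:ℕ)) * v := by
              refine tsub_le_tsub_right ?_ _
              rw [← mul_assoc]
              refine mul_le_mul_left ?_ _
              rw [show (2:ℝ≥0∞) = ENNReal.ofReal (2:ℝ) by norm_num,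
                ← ENNReal.ofReal_mul (by norm_num)]
              exact ENNReal.ofReal_le_ofReal hpow
          _ = volume (closedBall (0 : EuclideanSpace ℝ (Fin n)) (2*R))
              - volume (closedBall (0 : EuclideanSpace ℝ (Fin n)) R) := by
              rw [h2R, hRn]
          _ ≤ volume A := le_measure_diff
      -- lower bound for the integral of g over A
      have hlow : C0 * (W * v) ≤ ∫⁻ x in A, ENNReal.ofReal (g x) := by
        calc C0 * (W * v) ≤ C0 * volume A := mul_le_mul_right hWv _
          _ = ∫⁻ _x in A, C0 := (setLIntegral_const _ _).symm
          _ ≤ ∫⁻ x in A, ENNReal.ofReal (g x) := setLIntegral_mono' hAm hconA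
      -- contradiction
      have hfinal : 2 * (D + 1) * W ≤ D * W := by
        have h1 : C0 * (W * v) = 2 * (D + 1) * W := by
          rw [hC0]
          rw [show 2 * (D + 1) * v⁻¹ * (W * v) = 2 * (D + 1) * W * (v⁻¹ * v) by ring]
          rw [ENNReal.inv_mul_cancel hv0 hvtop, mul_one]
        rw [← h1]
        exact hlow.trans hupg
      have h2 : 2 * (D + 1) ≤ D := by
        have := (ENNReal.mul_le_mul_iff_left hW0 hWtop).1 hfinal
        exact this
      have h3 : D < 2 * (D + 1) := by
        calc D < D + 1 := ENNReal.lt_add_right hDtop one_ne_zero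
          _ ≤ 2 * (D + 1) := by
              rw [two_mul]
              exact le_add_self
      exact absurd (h3.trans_le h2) (lt_irrefl D)
    refine IsCoboundedUnder.of_frequently_le (a := C0.toReal) ?_
    rw [hl]
    refine frequently_comap.2 (frequently_atTop.2 fun M => ?_)
    obtain ⟨x, hx1, hx2⟩ := hex (max M 1) (lt_of_lt_of_le one_pos (le_max_right _ _))
    exact ⟨‖x‖, le_trans (le_max_left M 1) hx1.le, x, rfl, hx2⟩
  have hIL : I ≤ liminf g l := by
    by_contra hIL
    push_neg at hIL
    set L := liminf g l with hL
    set ε : ℝ := min ((I - L)/2) (I/2) with hε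
    have hε0 : 0 < ε := lt_min (by linarith) (by linarith)
    have hεI : ε < I := lt_of_le_of_lt (min_le_right _ _) (by linarith)
    have h1 : I - ε ≤ L := le_liminf_of_le hco (h5 ε hε0 hεI)
    have h2 : ε ≤ (I - L)/2 := min_le_left _ _
    linarith
  exact ⟨hIL, hI⟩
end

section
/- Let n ≥ 1, σ ∈ (0, n/2), and q > 2σ. There exists a constant C > 0 such that for every y ∈ ℝⁿ with |y| ≤ 1, ∫_{ℝⁿ} |x - y|^{-(n-2σ)} (1 + |x|)^{-q} dx ≤ C, and for every y with |y| > 1: the integral is at most C|y|^{2σ-q} if q < n, at most C·log(1+|y|)·|y|^{2σ-n} if q = n, and at most C|y|^{2σ-n} if q > n. -/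
open MeasureTheory Set Metric
open scoped ENNReal NNReal

namespace RieszAux

noncomputable def kap (n : ℕ) : ℝ :=
  (n : ℝ) * (volume (ball (0 : EuclideanSpace ℝ (Fin n)) 1)).toReal

variable {n : ℕ}

lemma kap_pos (hn : 1 ≤ n) : 0 < kap n := by
  haveI : Nontrivial (EuclideanSpace ℝ (Fin n)) :=
    Module.finrank_pos_iff.mp (by rw [finrank_euclideanSpace_fin]; exact hn)
  exact mul_pos (by exact_mod_cast hn) (ENNReal.toReal_pos
    (measure_ball_pos volume 0 one_pos).ne' measure_ball_lt_top.ne)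

lemma integrable_radial (hn : 1 ≤ n) {g : ℝ → ℝ}
    (hg : IntegrableOn (fun t : ℝ => t ^ (n - 1 : ℕ) * g t) (Ioi 0)) :
    Integrable (fun x : EuclideanSpace ℝ (Fin n) => g ‖x‖) := by
  set E := EuclideanSpace ℝ (Fin n) with hE
  have hfr : Module.finrank ℝ E = n := finrank_euclideanSpace_fin
  have hF : Integrable ((fun t : ℝ => t ^ (n - 1 : ℕ) * g t) ∘ (Subtype.val : Ioi (0:ℝ) → ℝ))
      (Measure.comap Subtype.val volume) := by
    rw [← MeasurableEmbedding.integrable_map_iff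
        (MeasurableEmbedding.subtype_coe measurableSet_Ioi),
      map_comap_subtype_coe measurableSet_Ioi]
    exact hg
  have hEmeas : Integrable (fun r : Ioi (0:ℝ) => g r) (Measure.volumeIoiPow (n - 1)) := by
    rw [Measure.volumeIoiPow]
    rw [show (fun r : Ioi (0:ℝ) => ENNReal.ofReal ((r:ℝ) ^ (n-1))) =
        (fun r : Ioi (0:ℝ) => (((r:ℝ) ^ (n-1)).toNNReal : ℝ≥0∞)) from rfl]
    rw [integrable_withDensity_iff_integrable_smul
      ((measurable_subtype_coe.pow_const _).real_toNNReal)]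
    refine hF.congr (Filter.Eventually.of_forall fun r => ?_)
    show _ = ((r:ℝ) ^ (n-1)).toNNReal • g r
    rw [NNReal.smul_def, Real.coe_toNNReal _ (pow_nonneg r.2.out.le _), smul_eq_mul]
    rfl
  have hprod : Integrable (fun z : sphere (0:E) 1 × Ioi (0:ℝ) => g z.2)
      ((volume : Measure E).toSphere.prod (Measure.volumeIoiPow (n - 1))) := by
    have := (integrable_const (1:ℝ) (μ := (volume : Measure E).toSphere)).smul_prod hEmeas
    simpa using this
  have hcomap : Integrable (fun x : ({(0:E)}ᶜ : Set E) => g ‖x.1‖)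
      (Measure.comap Subtype.val volume) := by
    have hmp := (Measure.measurePreserving_homeomorphUnitSphereProd (volume : Measure E))
    rw [hfr] at hmp
    have := (hmp.integrable_comp_emb (Homeomorph.measurableEmbedding _)).mpr hprod
    simpa only [Function.comp_def, homeomorphUnitSphereProd_apply_snd_coe] using this
  haveI : Nontrivial E := Module.finrank_pos_iff.mp (by rw [hfr]; exact hn)
  rw [← MeasureTheory.restrict_compl_singleton (μ := (volume : Measure E)) (0:E),
    ← map_comap_subtype_coe (measurableSet_singleton (0:E)).compl,
    MeasurableEmbedding.integrable_map_iff
      (MeasurableEmbedding.subtype_coe (measurableSet_singleton (0:E)).compl)]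
  exact hcomap

lemma integral_radial (hn : 1 ≤ n) (g : ℝ → ℝ) :
    ∫ x : EuclideanSpace ℝ (Fin n), g ‖x‖ =
      kap n * ∫ t in Ioi (0:ℝ), t ^ (n - 1 : ℕ) * g t := by
  haveI : Nontrivial (EuclideanSpace ℝ (Fin n)) :=
    Module.finrank_pos_iff.mp (by rw [finrank_euclideanSpace_fin]; exact hn)
  rw [integral_fun_norm_addHaar (volume : Measure (EuclideanSpace ℝ (Fin n))) g,
    finrank_euclideanSpace_fin, kap, nsmul_eq_mul, smul_eq_mul, mul_assoc]
  simp only [smul_eq_mul]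
  rfl


lemma cast_pred (hn : 1 ≤ n) : ((n - 1 : ℕ) : ℝ) = (n : ℝ) - 1 := by
  rw [Nat.cast_sub hn, Nat.cast_one]

lemma pow_mul_rpow {t : ℝ} (hn : 1 ≤ n) (ht : 0 < t) (a : ℝ) :
    t ^ (n - 1 : ℕ) * t ^ a = t ^ ((n : ℝ) - 1 + a) := by
  rw [← Real.rpow_natCast t (n-1), ← Real.rpow_add ht, cast_pred hn]

lemma piece_ball (hn : 1 ≤ n) {r R : ℝ} (hr0 : 0 ≤ r) (hrn : r < n) (hR : 0 < R) :
    Integrable (fun x : EuclideanSpace ℝ (Fin n) => if ‖x‖ ≤ R then ‖x‖ ^ (-r) else 0) ∧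
    ∫ x : EuclideanSpace ℝ (Fin n), (if ‖x‖ ≤ R then ‖x‖ ^ (-r) else 0) =
      kap n * (R ^ ((n:ℝ) - r) / ((n:ℝ) - r)) := by
  have h1 : (-1 : ℝ) < (n:ℝ) - 1 + (-r) := by
    have : (1:ℝ) ≤ n := by exact_mod_cast hn
    linarith
  have hind : Set.indicator (Ioi (0:ℝ))
        (fun t => t ^ (n - 1 : ℕ) * (if t ≤ R then t ^ (-r) else 0)) =
      Set.indicator (Ioc (0:ℝ) R) (fun t => t ^ ((n:ℝ) - 1 + (-r))) := by
    ext t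
    by_cases ht : t ∈ Ioi (0:ℝ)
    · rw [Set.indicator_of_mem ht]
      by_cases htR : t ≤ R
      · rw [Set.indicator_of_mem (show t ∈ Ioc (0:ℝ) R from ⟨ht, htR⟩)]
        simp only [htR, if_true]
        exact pow_mul_rpow hn ht _
      · rw [Set.indicator_of_notMem (show t ∉ Ioc (0:ℝ) R from fun hc => htR hc.2)]
        simp [htR]
    · rw [Set.indicator_of_notMem ht,
        Set.indicator_of_notMem (show t ∉ Ioc (0:ℝ) R from fun hc => ht hc.1)]
  have hioc : IntegrableOn (fun t : ℝ => t ^ ((n:ℝ) - 1 + (-r))) (Ioc 0 R) :=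
    (intervalIntegral.intervalIntegrable_rpow' h1).1
  have hion : IntegrableOn
      (fun t : ℝ => t ^ (n - 1 : ℕ) * (if t ≤ R then t ^ (-r) else 0)) (Ioi 0) := by
    have h2 := (integrable_indicator_iff measurableSet_Ioc).mpr hioc
    rw [← hind] at h2
    exact (integrable_indicator_iff measurableSet_Ioi).mp h2
  refine ⟨integrable_radial hn hion, ?_⟩
  rw [integral_radial hn (fun t => if t ≤ R then t ^ (-r) else 0)]
  congr 1
  rw [← integral_indicator measurableSet_Ioi, hind, integral_indicator measurableSet_Ioc,
    ← intervalIntegral.integral_of_le hR.le, integral_rpow (Or.inl h1)]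
  have he : (n:ℝ) - 1 + (-r) + 1 = (n:ℝ) - r := by ring
  rw [he, Real.zero_rpow (sub_pos.2 hrn).ne', sub_zero]

lemma piece_tail (hn : 1 ≤ n) {s R : ℝ} (hs : (n:ℝ) < s) (hR : 0 < R) :
    Integrable (fun x : EuclideanSpace ℝ (Fin n) => if R < ‖x‖ then ‖x‖ ^ (-s) else 0) ∧
    ∫ x : EuclideanSpace ℝ (Fin n), (if R < ‖x‖ then ‖x‖ ^ (-s) else 0) =
      kap n * (R ^ ((n:ℝ) - s) / (s - (n:ℝ))) := by
  have h1 : (n:ℝ) - 1 + (-s) < -1 := by linarith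
  have hind : Set.indicator (Ioi (0:ℝ))
        (fun t => t ^ (n - 1 : ℕ) * (if R < t then t ^ (-s) else 0)) =
      Set.indicator (Ioi R) (fun t => t ^ ((n:ℝ) - 1 + (-s))) := by
    ext t
    by_cases ht : t ∈ Ioi (0:ℝ)
    · rw [Set.indicator_of_mem ht]
      by_cases htR : R < t
      · rw [Set.indicator_of_mem (show t ∈ Ioi R from htR)]
        simp only [htR, if_true]
        exact pow_mul_rpow hn ht _
      · rw [Set.indicator_of_notMem (show t ∉ Ioi R from htR)]
        simp [htR]
    · rw [Set.indicator_of_notMem ht,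
        Set.indicator_of_notMem (show t ∉ Ioi R from fun hc => ht (lt_trans hR hc))]
  have hioc : IntegrableOn (fun t : ℝ => t ^ ((n:ℝ) - 1 + (-s))) (Ioi R) :=
    integrableOn_Ioi_rpow_of_lt h1 hR
  have hion : IntegrableOn
      (fun t : ℝ => t ^ (n - 1 : ℕ) * (if R < t then t ^ (-s) else 0)) (Ioi 0) := by
    have h2 := (integrable_indicator_iff measurableSet_Ioi).mpr hioc
    rw [← hind] at h2
    exact (integrable_indicator_iff measurableSet_Ioi).mp h2
  refine ⟨integrable_radial hn hion, ?_⟩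
  rw [integral_radial hn (fun t => if R < t then t ^ (-s) else 0)]
  congr 1
  rw [← integral_indicator measurableSet_Ioi, hind, integral_indicator measurableSet_Ioi,
    integral_Ioi_rpow_of_lt h1 hR]
  have he : (n:ℝ) - 1 + (-s) + 1 = (n:ℝ) - s := by ring
  rw [he, neg_div, ← div_neg, neg_sub]

lemma contOn_w' (s : ℝ) {R : ℝ} :
    ContinuousOn (fun t : ℝ => (1 + t) ^ s) (Icc (0:ℝ) R) := by
  have hc : ContinuousOn (fun t : ℝ => 1 + t) (Icc (0:ℝ) R) :=
    (continuous_const.add continuous_id).continuousOn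
  exact hc.rpow_const fun t ht => Or.inl (fun hc' => by linarith [ht.1])

lemma contOn_w {q : ℝ} {R : ℝ} :
    ContinuousOn (fun t : ℝ => t ^ (n - 1 : ℕ) * (1 + t) ^ (-q)) (Icc 0 R) :=
  (continuous_pow _).continuousOn.mul (contOn_w' (-q))

lemma piece_w (hn : 1 ≤ n) {q R : ℝ} (hR : 0 < R) :
    Integrable (fun x : EuclideanSpace ℝ (Fin n) => if ‖x‖ ≤ R then (1 + ‖x‖) ^ (-q) else 0) ∧
    ∫ x : EuclideanSpace ℝ (Fin n), (if ‖x‖ ≤ R then (1 + ‖x‖) ^ (-q) else 0) =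
      kap n * ∫ t in Ioc (0:ℝ) R, t ^ (n - 1 : ℕ) * (1 + t) ^ (-q) := by
  have hind : Set.indicator (Ioi (0:ℝ))
        (fun t => t ^ (n - 1 : ℕ) * (if t ≤ R then (1 + t) ^ (-q) else 0)) =
      Set.indicator (Ioc (0:ℝ) R) (fun t => t ^ (n - 1 : ℕ) * (1 + t) ^ (-q)) := by
    ext t
    by_cases ht : t ∈ Ioi (0:ℝ)
    · rw [Set.indicator_of_mem ht]
      by_cases htR : t ≤ R
      · rw [Set.indicator_of_mem (show t ∈ Ioc (0:ℝ) R from ⟨ht, htR⟩)]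
        simp [htR]
      · rw [Set.indicator_of_notMem (show t ∉ Ioc (0:ℝ) R from fun hc => htR hc.2)]
        simp [htR]
    · rw [Set.indicator_of_notMem ht,
        Set.indicator_of_notMem (show t ∉ Ioc (0:ℝ) R from fun hc => ht hc.1)]
  have hioc : IntegrableOn (fun t : ℝ => t ^ (n - 1 : ℕ) * (1 + t) ^ (-q)) (Ioc 0 R) :=
    (contOn_w.integrableOn_Icc).mono_set Ioc_subset_Icc_self
  have hion : IntegrableOn
      (fun t : ℝ => t ^ (n - 1 : ℕ) * (if t ≤ R then (1 + t) ^ (-q) else 0)) (Ioi 0) := by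
    have h2 := (integrable_indicator_iff measurableSet_Ioc).mpr hioc
    rw [← hind] at h2
    exact (integrable_indicator_iff measurableSet_Ioi).mp h2
  refine ⟨integrable_radial hn hion, ?_⟩
  rw [integral_radial hn (fun t => if t ≤ R then (1 + t) ^ (-q) else 0)]
  congr 1
  rw [← integral_indicator measurableSet_Ioi, hind, integral_indicator measurableSet_Ioc]

lemma Jbound (hn : 1 ≤ n) {q R : ℝ} (hR : 0 < R) :
    ∫ t in Ioc (0:ℝ) R, t ^ (n - 1 : ℕ) * (1 + t) ^ (-q) ≤
      ∫ u in (1:ℝ)..(1 + R), u ^ ((n:ℝ) - 1 - q) := by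
  have step1 : ∫ t in Ioc (0:ℝ) R, t ^ (n - 1 : ℕ) * (1 + t) ^ (-q) ≤
      ∫ t in Ioc (0:ℝ) R, (1 + t) ^ ((n:ℝ) - 1 - q) := by
    refine setIntegral_mono_on
      ((contOn_w.integrableOn_Icc).mono_set Ioc_subset_Icc_self)
      (((contOn_w' ((n:ℝ) - 1 - q)).integrableOn_Icc).mono_set Ioc_subset_Icc_self)
      measurableSet_Ioc fun t ht => ?_
    have ht1 : (0:ℝ) < 1 + t := by linarith [ht.1]
    have h2 : t ^ (n - 1 : ℕ) ≤ (1 + t) ^ (n - 1 : ℕ) :=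
      pow_le_pow_left₀ ht.1.le (by linarith) _
    have h3 : t ^ (n - 1 : ℕ) * (1 + t) ^ (-q) ≤ (1 + t) ^ (n - 1 : ℕ) * (1 + t) ^ (-q) :=
      mul_le_mul_of_nonneg_right h2 (Real.rpow_nonneg ht1.le _)
    refine h3.trans_eq ?_
    rw [pow_mul_rpow hn ht1 (-q), sub_eq_add_neg ((n:ℝ) - 1) q]
  refine step1.trans_eq ?_
  rw [← intervalIntegral.integral_of_le (by linarith : (0:ℝ) ≤ R),
    show (fun t : ℝ => (1 + t) ^ ((n:ℝ) - 1 - q)) =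
      (fun t : ℝ => (fun u : ℝ => u ^ ((n:ℝ) - 1 - q)) (1 + t)) from rfl,
    intervalIntegral.integral_comp_add_left (fun u : ℝ => u ^ ((n:ℝ) - 1 - q)) 1]
  norm_num

lemma div_rpow_eq {R c : ℝ} (hR : 0 ≤ R) (hc : 0 < c) (a : ℝ) :
    (R / c) ^ a = c ^ (-a) * R ^ a := by
  rw [Real.div_rpow hR hc.le, div_eq_mul_inv, ← Real.rpow_neg hc.le, mul_comm]

lemma ite_nn {c : Prop} [Decidable c] {a : ℝ} (h : 0 ≤ a) : 0 ≤ if c then a else 0 := by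
  split_ifs
  exacts [h, le_rfl]

lemma Klt {q R : ℝ} (hn : 1 ≤ n) (hqn : q < (n:ℝ)) (hR : 1 < R) :
    ∫ u in (1:ℝ)..(1 + R), u ^ ((n:ℝ) - 1 - q) ≤
      2 ^ ((n:ℝ) - q) * R ^ ((n:ℝ) - q) / ((n:ℝ) - q) := by
  rw [integral_rpow (Or.inl (by linarith : (-1:ℝ) < (n:ℝ) - 1 - q)),
    show (n:ℝ) - 1 - q + 1 = (n:ℝ) - q from by ring, Real.one_rpow]
  have h2R : (1 + R) ^ ((n:ℝ) - q) ≤ 2 ^ ((n:ℝ) - q) * R ^ ((n:ℝ) - q) := by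
    rw [← Real.mul_rpow (by norm_num) (by linarith)]
    exact Real.rpow_le_rpow (by linarith) (by linarith) (by linarith)
  exact div_le_div_of_nonneg_right (by linarith) (by linarith)

lemma Keq {R : ℝ} (hn : 1 ≤ n) (hR : 1 < R) :
    ∫ u in (1:ℝ)..(1 + R), u ^ ((n:ℝ) - 1 - (n:ℝ)) ≤ Real.log (1 + R) := by
  rw [show (n:ℝ) - 1 - (n:ℝ) = -1 from by ring,
    intervalIntegral.integral_congr (g := fun u : ℝ => u⁻¹)
      (fun u hu => Real.rpow_neg_one u),
    integral_inv ?_, div_one]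
  rw [Set.uIcc_of_le (by linarith : (1:ℝ) ≤ 1 + R)]
  rintro ⟨hc, -⟩
  norm_num at hc

lemma Kgt {q R : ℝ} (hn : 1 ≤ n) (hqn : (n:ℝ) < q) (hR : 1 < R) :
    ∫ u in (1:ℝ)..(1 + R), u ^ ((n:ℝ) - 1 - q) ≤ 1 / (q - (n:ℝ)) := by
  have hs : (n:ℝ) - 1 - q < -1 := by linarith
  rw [intervalIntegral.integral_of_le (by linarith : (1:ℝ) ≤ 1 + R)]
  have h1 : ∫ u in Ioc (1:ℝ) (1 + R), u ^ ((n:ℝ) - 1 - q) ≤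
      ∫ u in Ioi (1:ℝ), u ^ ((n:ℝ) - 1 - q) := by
    refine setIntegral_mono_set (integrableOn_Ioi_rpow_of_lt hs one_pos) ?_
      (HasSubset.Subset.eventuallyLE Ioc_subset_Ioi_self)
    filter_upwards [ae_restrict_mem measurableSet_Ioi] with u hu
    exact Real.rpow_nonneg (by linarith [hu.out] : (0:ℝ) ≤ u) _
  refine h1.trans_eq ?_
  rw [integral_Ioi_rpow_of_lt hs one_pos, Real.one_rpow,
    show (n:ℝ) - 1 - q + 1 = (n:ℝ) - q from by ring, neg_div, ← div_neg, neg_sub]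

end RieszAux
open MeasureTheory

set_option maxHeartbeats 1000000 in
/-- Uniform bounds for `∫ |x-y|^{-(n-2σ)}(1+|x|)^{-q} dx` when `q > 2σ`:
bounded for `|y| ≤ 1`, and for `|y| > 1` bounded by `C|y|^{2σ-q}` if `q < n`,
by `C log(1+|y|)|y|^{2σ-n}` if `q = n`, and by `C|y|^{2σ-n}` if `q > n`. -/
theorem riesz_kernel_integral_bounds (n : ℕ) (hn : 1 ≤ n) (σ q : ℝ)
    (hσ : 0 < σ) (hσ2 : σ < (n : ℝ) / 2) (hq : 2 * σ < q) :
    ∃ C > 0, ∀ y : EuclideanSpace ℝ (Fin n),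
      (‖y‖ ≤ 1 →
        (∫ x, ‖x - y‖ ^ (-((n : ℝ) - 2 * σ)) * (1 + ‖x‖) ^ (-q)) ≤ C) ∧
      (1 < ‖y‖ →
        (q < n →
          (∫ x, ‖x - y‖ ^ (-((n : ℝ) - 2 * σ)) * (1 + ‖x‖) ^ (-q)) ≤
            C * ‖y‖ ^ (2 * σ - q)) ∧
        (q = n →
          (∫ x, ‖x - y‖ ^ (-((n : ℝ) - 2 * σ)) * (1 + ‖x‖) ^ (-q)) ≤
            C * Real.log (1 + ‖y‖) * ‖y‖ ^ (2 * σ - (n : ℝ))) ∧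
        ((n : ℝ) < q →
          (∫ x, ‖x - y‖ ^ (-((n : ℝ) - 2 * σ)) * (1 + ‖x‖) ^ (-q)) ≤
            C * ‖y‖ ^ (2 * σ - (n : ℝ)))) := by
  classical
  have hn1 : (1:ℝ) ≤ (n:ℝ) := by exact_mod_cast hn
  set r : ℝ := (n:ℝ) - 2*σ with hr
  have hr0 : 0 < r := by rw [hr]; linarith
  have hrn : r < (n:ℝ) := by rw [hr]; linarith
  have hq0 : 0 < q := by linarith
  have hsrq : (n:ℝ) < r + q := by rw [hr]; linarith
  have hκ : 0 < RieszAux.kap n := RieszAux.kap_pos hn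
  set κ : ℝ := RieszAux.kap n with hκdef
  have hnr2σ : (n:ℝ) - r = 2*σ := by rw [hr]; ring
  have hmrσ : -r = 2*σ - (n:ℝ) := by rw [hr]; ring
  -- small-case pieces
  obtain ⟨ib1, eb1⟩ := RieszAux.piece_ball (n := n) hn hr0.le hrn one_pos
  obtain ⟨ib2, eb2⟩ :=
    RieszAux.piece_ball (n := n) (r := 0) hn le_rfl (by linarith) two_pos
  obtain ⟨it2, et2⟩ := RieszAux.piece_tail (n := n) hn hsrq two_pos
  set D0 : ℝ := κ * ((1:ℝ) ^ ((n:ℝ) - r) / ((n:ℝ) - r)) +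
      (κ * ((2:ℝ) ^ ((n:ℝ) - 0) / ((n:ℝ) - 0)) +
       2 ^ r * (κ * ((2:ℝ) ^ ((n:ℝ) - (r+q)) / ((r+q) - (n:ℝ))))) with hD0
  set D1 : ℝ := κ / (2*σ) * 2 ^ (q - 2*σ) with hD1
  set D3 : ℝ := 4 ^ r * κ / (q - 2*σ) with hD3
  set D2lt : ℝ := 2 ^ r * κ * (2 ^ ((n:ℝ) - q) / ((n:ℝ) - q)) with hD2lt
  set D2eq : ℝ := 2 ^ r * κ with hD2eq
  set D2gt : ℝ := 2 ^ r * κ * (1 / (q - (n:ℝ))) with hD2gt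
  have hD0nn : 0 ≤ D0 := by
    rw [hD0]
    have h1 : (0:ℝ) ≤ κ * ((1:ℝ) ^ ((n:ℝ) - r) / ((n:ℝ) - r)) :=
      mul_nonneg hκ.le (div_nonneg (Real.rpow_nonneg zero_le_one _) (by linarith))
    have h2 : (0:ℝ) ≤ κ * ((2:ℝ) ^ ((n:ℝ) - 0) / ((n:ℝ) - 0)) :=
      mul_nonneg hκ.le (div_nonneg (Real.rpow_nonneg (by norm_num) _) (by linarith))
    have h3 : (0:ℝ) ≤ 2 ^ r * (κ * ((2:ℝ) ^ ((n:ℝ) - (r+q)) / ((r+q) - (n:ℝ)))) :=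
      mul_nonneg (Real.rpow_nonneg (by norm_num) _)
        (mul_nonneg hκ.le (div_nonneg (Real.rpow_nonneg (by norm_num) _) (by linarith)))
    linarith
  have hD1nn : 0 ≤ D1 := by
    rw [hD1]
    exact mul_nonneg (div_nonneg hκ.le (by linarith)) (Real.rpow_nonneg (by norm_num) _)
  have hD3nn : 0 ≤ D3 := by
    rw [hD3]
    exact div_nonneg (mul_nonneg (Real.rpow_nonneg (by norm_num) _) hκ.le) (by linarith)
  have hD2eqnn : 0 ≤ D2eq := by
    rw [hD2eq]
    exact mul_nonneg (Real.rpow_nonneg (by norm_num) _) hκ.le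
  set C : ℝ := max (max (D0 + 1) (D1 + D2lt + D3))
      (max ((D1 + D3) / Real.log 2 + D2eq) (D1 + D3 + D2gt)) with hC
  have hCD0 : D0 + 1 ≤ C := (le_max_left _ _).trans (le_max_left _ _)
  have hClt : D1 + D2lt + D3 ≤ C := (le_max_right _ _).trans (le_max_left _ _)
  have hCeq : (D1 + D3) / Real.log 2 + D2eq ≤ C := (le_max_left _ _).trans (le_max_right _ _)
  have hCgt : D1 + D3 + D2gt ≤ C := (le_max_right _ _).trans (le_max_right _ _)
  have hCpos : 0 < C := lt_of_lt_of_le (by linarith) hCD0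
  refine ⟨C, hCpos, fun y => ?_⟩
  have hF0 : 0 ≤ᵐ[(volume : Measure (EuclideanSpace ℝ (Fin n)))]
      fun x : EuclideanSpace ℝ (Fin n) => ‖x - y‖ ^ (-r) * (1 + ‖x‖) ^ (-q) :=
    Filter.Eventually.of_forall fun x =>
      mul_nonneg (Real.rpow_nonneg (norm_nonneg _) _)
        (Real.rpow_nonneg (by positivity) _)
  constructor
  · -- small case : ‖y‖ ≤ 1
    intro hy
    have hM : Integrable (fun x : EuclideanSpace ℝ (Fin n) =>
        (if ‖x - y‖ ≤ 1 then ‖x - y‖ ^ (-r) else 0) +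
        ((if ‖x‖ ≤ 2 then ‖x‖ ^ (-(0:ℝ)) else 0) +
         2 ^ r * (if 2 < ‖x‖ then ‖x‖ ^ (-(r+q)) else 0))) :=
      (ib1.comp_sub_right y).add (ib2.add (it2.const_mul _))
    have hpt : ∀ x : EuclideanSpace ℝ (Fin n),
        ‖x - y‖ ^ (-r) * (1 + ‖x‖) ^ (-q) ≤
        (if ‖x - y‖ ≤ 1 then ‖x - y‖ ^ (-r) else 0) +
        ((if ‖x‖ ≤ 2 then ‖x‖ ^ (-(0:ℝ)) else 0) +
         2 ^ r * (if 2 < ‖x‖ then ‖x‖ ^ (-(r+q)) else 0)) := by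
      intro x
      have hw1 : (1 + ‖x‖) ^ (-q) ≤ 1 :=
        Real.rpow_le_one_of_one_le_of_nonpos (by linarith [norm_nonneg x]) (by linarith)
      have hnn2 : (0:ℝ) ≤ (if ‖x‖ ≤ 2 then ‖x‖ ^ (-(0:ℝ)) else 0) :=
        RieszAux.ite_nn (Real.rpow_nonneg (norm_nonneg _) _)
      have hnn3 : (0:ℝ) ≤ 2 ^ r * (if 2 < ‖x‖ then ‖x‖ ^ (-(r+q)) else 0) :=
        mul_nonneg (Real.rpow_nonneg (by norm_num) _)
          (RieszAux.ite_nn (Real.rpow_nonneg (norm_nonneg _) _))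
      have hnn1 : (0:ℝ) ≤ (if ‖x - y‖ ≤ 1 then ‖x - y‖ ^ (-r) else 0) :=
        RieszAux.ite_nn (Real.rpow_nonneg (norm_nonneg _) _)
      by_cases h1 : ‖x - y‖ ≤ 1
      · have : ‖x - y‖ ^ (-r) * (1 + ‖x‖) ^ (-q) ≤ ‖x - y‖ ^ (-r) :=
          mul_le_of_le_one_right (Real.rpow_nonneg (norm_nonneg _) _) hw1
        rw [if_pos h1]
        linarith
      · push_neg at h1
        have ht1 : ‖x - y‖ ^ (-r) ≤ 1 :=
          Real.rpow_le_one_of_one_le_of_nonpos h1.le (by linarith)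
        by_cases h2 : ‖x‖ ≤ 2
        · have hF1 : ‖x - y‖ ^ (-r) * (1 + ‖x‖) ^ (-q) ≤ 1 :=
            mul_le_one₀ ht1 (Real.rpow_nonneg (by positivity) _) hw1
          rw [if_neg (not_le.mpr h1), if_pos h2, neg_zero, Real.rpow_zero]
          linarith
        · push_neg at h2
          have hx0 : (0:ℝ) < ‖x‖ := by linarith
          have hq4 : ‖x‖ / 2 ≤ ‖x - y‖ := by
            have h5 := norm_sub_norm_le x y
            linarith
          have h41 : ‖x - y‖ ^ (-r) ≤ (‖x‖ / 2) ^ (-r) :=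
            Real.rpow_le_rpow_of_nonpos (by positivity) hq4 (by linarith)
          have h42 : (‖x‖ / 2) ^ (-r) = 2 ^ r * ‖x‖ ^ (-r) := by
            rw [RieszAux.div_rpow_eq (norm_nonneg _) two_pos, neg_neg]
          have h43 : (1 + ‖x‖) ^ (-q) ≤ ‖x‖ ^ (-q) :=
            Real.rpow_le_rpow_of_nonpos hx0 (by linarith) (by linarith)
          have hF1 : ‖x - y‖ ^ (-r) * (1 + ‖x‖) ^ (-q) ≤
              (2 ^ r * ‖x‖ ^ (-r)) * ‖x‖ ^ (-q) :=
            mul_le_mul (h41.trans_eq h42) h43 (Real.rpow_nonneg (by positivity) _)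
              (by positivity)
          have hF2 : (2 ^ r * ‖x‖ ^ (-r)) * ‖x‖ ^ (-q) =
              2 ^ r * ‖x‖ ^ (-(r+q)) := by
            rw [mul_assoc, ← Real.rpow_add hx0, show -r + -q = -(r+q) from by ring]
          rw [if_neg (not_le.mpr h1), if_neg (not_le.mpr h2), if_pos h2]
          rw [hF2] at hF1
          linarith
    have hIM : (∫ x : EuclideanSpace ℝ (Fin n),
        ‖x - y‖ ^ (-r) * (1 + ‖x‖) ^ (-q)) ≤ D0 := by
      have hadd23 : Integrable (fun x : EuclideanSpace ℝ (Fin n) =>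
          (if ‖x‖ ≤ 2 then ‖x‖ ^ (-(0:ℝ)) else 0) +
          2 ^ r * (if 2 < ‖x‖ then ‖x‖ ^ (-(r+q)) else 0)) :=
        ib2.add (it2.const_mul ((2:ℝ) ^ r))
      refine (integral_mono_of_nonneg hF0 hM
        (Filter.Eventually.of_forall hpt)).trans_eq ?_
      rw [integral_add (ib1.comp_sub_right y) hadd23,
        integral_add ib2 (it2.const_mul ((2:ℝ) ^ r)), integral_const_mul,
        integral_sub_right_eq_self
          (fun z : EuclideanSpace ℝ (Fin n) => if ‖z‖ ≤ 1 then ‖z‖ ^ (-r) else 0) y,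
        eb1, eb2, et2, hD0]
    linarith
  · -- large case : 1 < ‖y‖
    intro hy1
    set R : ℝ := ‖y‖ with hRdef
    have hR0 : (0:ℝ) < R := by linarith
    have hhalf : (0:ℝ) < R / 2 := by linarith
    obtain ⟨jb, ej⟩ := RieszAux.piece_ball (n := n) hn hr0.le hrn hhalf
    obtain ⟨jw, ew⟩ := RieszAux.piece_w (n := n) (q := q) hn hR0
    obtain ⟨jt, et⟩ := RieszAux.piece_tail (n := n) hn hsrq hR0
    set J : ℝ := ∫ t in Set.Ioc (0:ℝ) R, t ^ (n - 1 : ℕ) * (1 + t) ^ (-q) with hJ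
    have hJnn : 0 ≤ J := by
      rw [hJ]
      refine setIntegral_nonneg measurableSet_Ioc fun t ht => ?_
      exact mul_nonneg (pow_nonneg ht.1.le _) (Real.rpow_nonneg (by linarith [ht.1]) _)
    have hM : Integrable (fun x : EuclideanSpace ℝ (Fin n) =>
        (R/2) ^ (-q) * (if ‖x - y‖ ≤ R/2 then ‖x - y‖ ^ (-r) else 0) +
        ((R/2) ^ (-r) * (if ‖x‖ ≤ R then (1 + ‖x‖) ^ (-q) else 0) +
         4 ^ r * (if R < ‖x‖ then ‖x‖ ^ (-(r+q)) else 0))) :=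
      ((jb.comp_sub_right y).const_mul _).add ((jw.const_mul _).add (jt.const_mul _))
    have hpt : ∀ x : EuclideanSpace ℝ (Fin n),
        ‖x - y‖ ^ (-r) * (1 + ‖x‖) ^ (-q) ≤
        (R/2) ^ (-q) * (if ‖x - y‖ ≤ R/2 then ‖x - y‖ ^ (-r) else 0) +
        ((R/2) ^ (-r) * (if ‖x‖ ≤ R then (1 + ‖x‖) ^ (-q) else 0) +
         4 ^ r * (if R < ‖x‖ then ‖x‖ ^ (-(r+q)) else 0)) := by
      intro x
      have hnn1 : (0:ℝ) ≤ (R/2) ^ (-q) * (if ‖x - y‖ ≤ R/2 then ‖x - y‖ ^ (-r) else 0) :=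
        mul_nonneg (Real.rpow_nonneg hhalf.le _)
          (RieszAux.ite_nn (Real.rpow_nonneg (norm_nonneg _) _))
      have hnn2 : (0:ℝ) ≤ (R/2) ^ (-r) * (if ‖x‖ ≤ R then (1 + ‖x‖) ^ (-q) else 0) :=
        mul_nonneg (Real.rpow_nonneg hhalf.le _)
          (RieszAux.ite_nn (Real.rpow_nonneg (by positivity) _))
      have hnn3 : (0:ℝ) ≤ 4 ^ r * (if R < ‖x‖ then ‖x‖ ^ (-(r+q)) else 0) :=
        mul_nonneg (Real.rpow_nonneg (by norm_num) _)
          (RieszAux.ite_nn (Real.rpow_nonneg (norm_nonneg _) _))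
      by_cases h1 : ‖x - y‖ ≤ R/2
      · have hxnorm : R/2 ≤ 1 + ‖x‖ := by
          have h5 := norm_sub_norm_le y x
          rw [norm_sub_rev] at h5
          linarith
        have hw : (1 + ‖x‖) ^ (-q) ≤ (R/2) ^ (-q) :=
          Real.rpow_le_rpow_of_nonpos hhalf hxnorm (by linarith)
        have hF1 : ‖x - y‖ ^ (-r) * (1 + ‖x‖) ^ (-q) ≤
            (R/2) ^ (-q) * ‖x - y‖ ^ (-r) := by
          rw [mul_comm ((R/2) ^ (-q))]
          exact mul_le_mul_of_nonneg_left hw (Real.rpow_nonneg (norm_nonneg _) _)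
        rw [if_pos h1]
        linarith
      · push_neg at h1
        have hk : ‖x - y‖ ^ (-r) ≤ (R/2) ^ (-r) :=
          Real.rpow_le_rpow_of_nonpos hhalf h1.le (by linarith)
        by_cases h2 : ‖x‖ ≤ R
        · have hF1 : ‖x - y‖ ^ (-r) * (1 + ‖x‖) ^ (-q) ≤
              (R/2) ^ (-r) * (1 + ‖x‖) ^ (-q) :=
            mul_le_mul_of_nonneg_right hk (Real.rpow_nonneg (by positivity) _)
          rw [if_neg (not_le.mpr h1), if_pos h2]
          rw [mul_zero]
          rw [if_neg (not_lt.mpr h2), mul_zero]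
          linarith
        · push_neg at h2
          have hx0 : (0:ℝ) < ‖x‖ := by linarith
          have hq4 : ‖x‖ / 4 ≤ ‖x - y‖ := by
            rcases le_or_gt ‖x‖ (2*R) with hc | hc
            · linarith
            · have h5 := norm_sub_norm_le x y
              linarith
          have h41 : ‖x - y‖ ^ (-r) ≤ (‖x‖ / 4) ^ (-r) :=
            Real.rpow_le_rpow_of_nonpos (by positivity) hq4 (by linarith)
          have h42 : (‖x‖ / 4) ^ (-r) = 4 ^ r * ‖x‖ ^ (-r) := by
            rw [RieszAux.div_rpow_eq (norm_nonneg _) (by norm_num : (0:ℝ) < 4), neg_neg]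
          have h43 : (1 + ‖x‖) ^ (-q) ≤ ‖x‖ ^ (-q) :=
            Real.rpow_le_rpow_of_nonpos hx0 (by linarith) (by linarith)
          have hF1 : ‖x - y‖ ^ (-r) * (1 + ‖x‖) ^ (-q) ≤
              (4 ^ r * ‖x‖ ^ (-r)) * ‖x‖ ^ (-q) :=
            mul_le_mul (h41.trans_eq h42) h43 (Real.rpow_nonneg (by positivity) _)
              (by positivity)
          have hF2 : (4 ^ r * ‖x‖ ^ (-r)) * ‖x‖ ^ (-q) = 4 ^ r * ‖x‖ ^ (-(r+q)) := by
            rw [mul_assoc, ← Real.rpow_add hx0, show -r + -q = -(r+q) from by ring]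
          rw [if_neg (not_le.mpr h1), if_neg (not_le.mpr h2), if_pos h2]
          rw [hF2] at hF1
          rw [mul_zero]
          linarith
    have hIM : (∫ x : EuclideanSpace ℝ (Fin n),
        ‖x - y‖ ^ (-r) * (1 + ‖x‖) ^ (-q)) ≤
        (R/2) ^ (-q) * (κ * ((R/2) ^ ((n:ℝ) - r) / ((n:ℝ) - r))) +
        ((R/2) ^ (-r) * (κ * J) +
         4 ^ r * (κ * (R ^ ((n:ℝ) - (r+q)) / ((r+q) - (n:ℝ))))) := by
      have hadd23 : Integrable (fun x : EuclideanSpace ℝ (Fin n) =>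
          (R/2) ^ (-r) * (if ‖x‖ ≤ R then (1 + ‖x‖) ^ (-q) else 0) +
          4 ^ r * (if R < ‖x‖ then ‖x‖ ^ (-(r+q)) else 0)) :=
        (jw.const_mul ((R/2) ^ (-r))).add (jt.const_mul ((4:ℝ) ^ r))
      refine (integral_mono_of_nonneg hF0 hM
        (Filter.Eventually.of_forall hpt)).trans_eq ?_
      rw [integral_add ((jb.comp_sub_right y).const_mul ((R/2) ^ (-q))) hadd23,
        integral_add (jw.const_mul ((R/2) ^ (-r))) (jt.const_mul ((4:ℝ) ^ r)),
        integral_const_mul, integral_const_mul, integral_const_mul,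
        integral_sub_right_eq_self
          (fun z : EuclideanSpace ℝ (Fin n) => if ‖z‖ ≤ R/2 then ‖z‖ ^ (-r) else 0) y,
        ej, ew, et, hJ]
    -- term 1 and term 3 closed forms
    have hT1 : (R/2) ^ (-q) * (κ * ((R/2) ^ ((n:ℝ) - r) / ((n:ℝ) - r))) =
        D1 * R ^ (2*σ - q) := by
      rw [hnr2σ]
      have h1 : (R/2) ^ (-q) * (R/2) ^ (2*σ) = (R/2) ^ (2*σ - q) := by
        rw [← Real.rpow_add hhalf]
        congr 1
        ring
      have h2 : (R/2) ^ (2*σ - q) = 2 ^ (q - 2*σ) * R ^ (2*σ - q) := by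
        rw [RieszAux.div_rpow_eq hR0.le two_pos]
        congr 2
        ring
      calc (R/2) ^ (-q) * (κ * ((R/2) ^ (2*σ) / (2*σ)))
          = κ / (2*σ) * ((R/2) ^ (-q) * (R/2) ^ (2*σ)) := by ring
        _ = κ / (2*σ) * (2 ^ (q - 2*σ) * R ^ (2*σ - q)) := by rw [h1, h2]
        _ = D1 * R ^ (2*σ - q) := by rw [hD1]; ring
    have hT3 : 4 ^ r * (κ * (R ^ ((n:ℝ) - (r+q)) / ((r+q) - (n:ℝ)))) =
        D3 * R ^ (2*σ - q) := by
      rw [show (n:ℝ) - (r+q) = 2*σ - q from by rw [hr]; ring,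
        show (r+q) - (n:ℝ) = q - 2*σ from by rw [hr]; ring, hD3]
      ring
    have hhr : (R/2) ^ (-r) = 2 ^ r * R ^ (-r) := by
      rw [RieszAux.div_rpow_eq hR0.le two_pos, neg_neg]
    have hRtnn : (0:ℝ) ≤ R ^ (2*σ - q) := Real.rpow_nonneg hR0.le _
    have hRtnn' : (0:ℝ) ≤ R ^ (2*σ - (n:ℝ)) := Real.rpow_nonneg hR0.le _
    refine ⟨?_, ?_, ?_⟩
    · -- q < n
      intro hqn'
      have hqn : q < (n:ℝ) := by exact_mod_cast hqn'
      have hKlt : J ≤ 2 ^ ((n:ℝ) - q) * R ^ ((n:ℝ) - q) / ((n:ℝ) - q) :=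
        (RieszAux.Jbound hn hR0).trans (RieszAux.Klt hn hqn hy1)
      have hT2 : (R/2) ^ (-r) * (κ * J) ≤ D2lt * R ^ (2*σ - q) := by
        calc (R/2) ^ (-r) * (κ * J) = 2 ^ r * κ * R ^ (-r) * J := by rw [hhr]; ring
          _ ≤ 2 ^ r * κ * R ^ (-r) *
              (2 ^ ((n:ℝ) - q) * R ^ ((n:ℝ) - q) / ((n:ℝ) - q)) := by
            refine mul_le_mul_of_nonneg_left hKlt ?_
            positivity
          _ = D2lt * (R ^ (-r) * R ^ ((n:ℝ) - q)) := by rw [hD2lt]; ring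
          _ = D2lt * R ^ (2*σ - q) := by
            rw [← Real.rpow_add hR0,
              show -r + ((n:ℝ) - q) = 2*σ - q from by rw [hr]; ring]
      have h0 := hIM
      rw [hT1, hT3] at h0
      have htot : (∫ x : EuclideanSpace ℝ (Fin n),
          ‖x - y‖ ^ (-r) * (1 + ‖x‖) ^ (-q)) ≤
          (D1 + D2lt + D3) * R ^ (2*σ - q) := by
        refine h0.trans ?_
        have step : D1 * R ^ (2*σ - q) +
            ((R/2) ^ (-r) * (κ * J) + D3 * R ^ (2*σ - q)) ≤
            D1 * R ^ (2*σ - q) + (D2lt * R ^ (2*σ - q) + D3 * R ^ (2*σ - q)) :=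
          add_le_add_right (add_le_add_left hT2 _) _
        refine step.trans_eq ?_
        ring
      exact htot.trans (mul_le_mul_of_nonneg_right hClt hRtnn)
    · -- q = n
      intro hqn
      have hqe : q = (n:ℝ) := by exact_mod_cast hqn
      have hKeq : J ≤ Real.log (1 + R) := by
        refine (RieszAux.Jbound hn hR0).trans ?_
        rw [hqe]
        exact RieszAux.Keq hn hy1
      have hlogR0 : (0:ℝ) ≤ Real.log (1 + R) :=
        Real.log_nonneg (by linarith)
      have hlog2 : (0:ℝ) < Real.log 2 := Real.log_pos one_lt_two
      have hloglog : Real.log 2 ≤ Real.log (1 + R) :=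
        Real.log_le_log two_pos (by linarith)
      have hT2 : (R/2) ^ (-r) * (κ * J) ≤
          D2eq * Real.log (1 + R) * R ^ (2*σ - (n:ℝ)) := by
        rw [← hmrσ]
        calc (R/2) ^ (-r) * (κ * J) = 2 ^ r * κ * J * R ^ (-r) := by rw [hhr]; ring
          _ ≤ 2 ^ r * κ * Real.log (1 + R) * R ^ (-r) := by
            refine mul_le_mul_of_nonneg_right ?_ (Real.rpow_nonneg hR0.le _)
            refine mul_le_mul_of_nonneg_left hKeq ?_
            positivity
          _ = D2eq * Real.log (1 + R) * R ^ (-r) := by rw [hD2eq]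
      have h13 : D1 * R ^ (2*σ - q) + D3 * R ^ (2*σ - q) ≤
          (D1 + D3) / Real.log 2 * Real.log (1 + R) * R ^ (2*σ - (n:ℝ)) := by
        rw [hqe]
        have e1 : D1 * R ^ (2*σ - (n:ℝ)) + D3 * R ^ (2*σ - (n:ℝ)) =
            (D1 + D3) * R ^ (2*σ - (n:ℝ)) := by ring
        rw [e1]
        have e2 : (D1 + D3) ≤ (D1 + D3) / Real.log 2 * Real.log (1 + R) := by
          rw [div_mul_eq_mul_div, le_div_iff₀ hlog2]
          exact mul_le_mul_of_nonneg_left hloglog (by linarith)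
        exact mul_le_mul_of_nonneg_right e2 hRtnn'
      have htot : (∫ x : EuclideanSpace ℝ (Fin n),
          ‖x - y‖ ^ (-r) * (1 + ‖x‖) ^ (-q)) ≤
          ((D1 + D3) / Real.log 2 + D2eq) * Real.log (1 + R) * R ^ (2*σ - (n:ℝ)) := by
        have h0 := hIM
        rw [hT1, hT3] at h0
        refine h0.trans ?_
        have step : D1 * R ^ (2*σ - q) +
            ((R/2) ^ (-r) * (κ * J) + D3 * R ^ (2*σ - q)) ≤
            (D1 * R ^ (2*σ - q) + D3 * R ^ (2*σ - q)) +
              D2eq * Real.log (1 + R) * R ^ (2*σ - (n:ℝ)) := by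
          have := add_le_add_right (add_le_add_left hT2 (D3 * R ^ (2*σ - q)))
            (D1 * R ^ (2*σ - q))
          refine this.trans_eq ?_
          ring
        refine step.trans ?_
        have step2 := add_le_add_left h13 (D2eq * Real.log (1 + R) * R ^ (2*σ - (n:ℝ)))
        refine step2.trans_eq ?_
        ring
      refine htot.trans ?_
      have hfac : (0:ℝ) ≤ Real.log (1 + R) * R ^ (2*σ - (n:ℝ)) :=
        mul_nonneg hlogR0 hRtnn'
      calc ((D1 + D3) / Real.log 2 + D2eq) * Real.log (1 + R) * R ^ (2*σ - (n:ℝ))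
          = ((D1 + D3) / Real.log 2 + D2eq) * (Real.log (1 + R) * R ^ (2*σ - (n:ℝ))) := by
            ring
        _ ≤ C * (Real.log (1 + R) * R ^ (2*σ - (n:ℝ))) :=
            mul_le_mul_of_nonneg_right hCeq hfac
        _ = C * Real.log (1 + R) * R ^ (2*σ - (n:ℝ)) := by ring
    · -- q > n
      intro hqn
      have hKgt : J ≤ 1 / (q - (n:ℝ)) :=
        (RieszAux.Jbound hn hR0).trans (RieszAux.Kgt hn hqn hy1)
      have hmono : R ^ (2*σ - q) ≤ R ^ (2*σ - (n:ℝ)) :=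
        Real.rpow_le_rpow_of_exponent_le hy1.le (by linarith)
      have hT2 : (R/2) ^ (-r) * (κ * J) ≤ D2gt * R ^ (2*σ - (n:ℝ)) := by
        rw [← hmrσ]
        calc (R/2) ^ (-r) * (κ * J) = 2 ^ r * κ * J * R ^ (-r) := by rw [hhr]; ring
          _ ≤ 2 ^ r * κ * (1 / (q - (n:ℝ))) * R ^ (-r) := by
            refine mul_le_mul_of_nonneg_right ?_ (Real.rpow_nonneg hR0.le _)
            refine mul_le_mul_of_nonneg_left hKgt ?_
            positivity
          _ = D2gt * R ^ (-r) := by rw [hD2gt]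
      have htot : (∫ x : EuclideanSpace ℝ (Fin n),
          ‖x - y‖ ^ (-r) * (1 + ‖x‖) ^ (-q)) ≤
          (D1 + D3 + D2gt) * R ^ (2*σ - (n:ℝ)) := by
        have h0 := hIM
        rw [hT1, hT3] at h0
        refine h0.trans ?_
        have h1 : D1 * R ^ (2*σ - q) ≤ D1 * R ^ (2*σ - (n:ℝ)) :=
          mul_le_mul_of_nonneg_left hmono hD1nn
        have h3 : D3 * R ^ (2*σ - q) ≤ D3 * R ^ (2*σ - (n:ℝ)) :=
          mul_le_mul_of_nonneg_left hmono hD3nn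
        have step : D1 * R ^ (2*σ - q) +
            ((R/2) ^ (-r) * (κ * J) + D3 * R ^ (2*σ - q)) ≤
            D1 * R ^ (2*σ - (n:ℝ)) +
              (D2gt * R ^ (2*σ - (n:ℝ)) + D3 * R ^ (2*σ - (n:ℝ))) :=
          add_le_add h1 (add_le_add hT2 h3)
        refine step.trans_eq ?_
        ring
      exact htot.trans (mul_le_mul_of_nonneg_right hCgt hRtnn')
end

section
/- Let n ≥ 1, σ ∈ (0, n/2), α < 2σ, and p ≥ (n - α)/(n - 2σ) with p > 1. Suppose u : ℝⁿ → [0, ∞) is measurable with ∫_{ℝⁿ} |y|^{-α} u(y)^p (1 + |y|)^{-γ} dy < ∞ for every γ > n - 2σ + (α - 2σ)/(p - 1). Then the function v(x) = ∫_{ℝⁿ} |y|^{-α} u(y)^p |x - y|^{-(n-2σ)} dy satisfies ∫_{ℝⁿ} v(x)(1 + |x|)^{-q} dx < ∞ for every q > n + (α - 2σ)/(p - 1). -/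
open MeasureTheory Metric Set
open scoped ENNReal NNReal

section Aux

/-! ### Real exponent identities -/

private lemma exp_id1 (M e c : ℝ) (hM : 0 < M) (k : ℕ) :
    (M / 2 ^ (k + 1)) ^ (-e) * (M / 2 ^ k) ^ c
      = 2 ^ e * M ^ (c - e) * ((2 : ℝ) ^ (e - c)) ^ k := by
  have hk : (0:ℝ) < 2 ^ k := by positivity
  have hk1 : (0:ℝ) < 2 ^ (k+1) := by positivity
  rw [Real.rpow_def_of_pos (div_pos hM hk1) (-e),
    Real.rpow_def_of_pos (div_pos hM hk) c,
    Real.rpow_def_of_pos two_pos e,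
    Real.rpow_def_of_pos hM (c - e),
    Real.rpow_def_of_pos two_pos (e - c),
    ← Real.exp_nat_mul, Real.log_div hM.ne' hk1.ne', Real.log_div hM.ne' hk.ne',
    Real.log_pow, Real.log_pow, ← Real.exp_add, ← Real.exp_add, ← Real.exp_add]
  congr 1
  push_cast
  ring

private lemma exp_id2 (M e c : ℝ) (hM : 0 < M) (k : ℕ) :
    (M * 2 ^ k) ^ (-e) * (M * 2 ^ (k + 1)) ^ c
      = 2 ^ c * M ^ (c - e) * ((2 : ℝ) ^ (c - e)) ^ k := by
  have hk : (0:ℝ) < 2 ^ k := by positivity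
  have hk1 : (0:ℝ) < 2 ^ (k+1) := by positivity
  rw [Real.rpow_def_of_pos (mul_pos hM hk) (-e),
    Real.rpow_def_of_pos (mul_pos hM hk1) c,
    Real.rpow_def_of_pos two_pos c,
    Real.rpow_def_of_pos hM (c - e),
    Real.rpow_def_of_pos two_pos (c - e),
    ← Real.exp_nat_mul, Real.log_mul hM.ne' hk.ne', Real.log_mul hM.ne' hk1.ne',
    Real.log_pow, Real.log_pow, ← Real.exp_add, ← Real.exp_add, ← Real.exp_add]
  congr 1
  push_cast
  ring

private lemma exp_id3 (t c₁ c₂ : ℝ) (ht : 0 < t) :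
    (t / 2) ^ c₁ * (2 * t) ^ c₂ = 2 ^ (c₂ - c₁) * t ^ (c₁ + c₂) := by
  rw [Real.rpow_def_of_pos (by positivity) c₁,
    Real.rpow_def_of_pos (by positivity) c₂,
    Real.rpow_def_of_pos two_pos (c₂ - c₁),
    Real.rpow_def_of_pos ht (c₁ + c₂),
    Real.log_div ht.ne' two_ne_zero, Real.log_mul two_ne_zero ht.ne',
    ← Real.exp_add, ← Real.exp_add]
  congr 1
  ring

private lemma exp_id4 (x a b : ℝ) (hx : 0 < x) :
    (x / 2) ^ (-a) * x ^ (-b) = 2 ^ a * x ^ (-(a + b)) := by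
  rw [Real.rpow_def_of_pos (by positivity) (-a),
    Real.rpow_def_of_pos hx (-b),
    Real.rpow_def_of_pos two_pos a,
    Real.rpow_def_of_pos hx (-(a+b)),
    Real.log_div hx.ne' two_ne_zero,
    ← Real.exp_add, ← Real.exp_add]
  congr 1
  ring

variable {E : Type*} [NormedAddCommGroup E] [NormedSpace ℝ E] [MeasurableSpace E] [BorelSpace E]
  [FiniteDimensional ℝ E] [Nontrivial E] (μ : Measure E) [μ.IsAddHaarMeasure]

/-- Dyadic-shell bound for the integral of `‖x - y‖ ^ (-e)` over a ball around `y`. -/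
private lemma shell_bound {e : ℝ} (he : 0 < e) (hen : e < (Module.finrank ℝ E : ℝ)) :
    ∃ C : ℝ≥0∞, C ≠ ⊤ ∧ ∀ (y : E) (M : ℝ), 0 < M →
      ∫⁻ x in ball y M, ENNReal.ofReal (‖x - y‖ ^ (-e)) ∂μ
        ≤ C * ENNReal.ofReal (M ^ ((Module.finrank ℝ E : ℝ) - e)) := by
  have hr0 : (0:ℝ) ≤ (2:ℝ) ^ (e - (Module.finrank ℝ E : ℝ)) := Real.rpow_nonneg (by norm_num) _
  have hrlt : ENNReal.ofReal ((2:ℝ) ^ (e - (Module.finrank ℝ E : ℝ))) < 1 := by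
    rw [ENNReal.ofReal_lt_one]
    exact Real.rpow_lt_one_of_one_lt_of_neg one_lt_two (by linarith)
  set r : ℝ≥0∞ := ENNReal.ofReal ((2:ℝ) ^ (e - (Module.finrank ℝ E : ℝ))) with hr
  have hS : (∑' k : ℕ, r ^ k) ≠ ⊤ := by
    rw [ENNReal.tsum_geometric]
    exact ENNReal.inv_ne_top.2 (tsub_pos_of_lt hrlt).ne'
  refine ⟨ENNReal.ofReal ((2:ℝ) ^ e) * μ (ball (0:E) 1) * ∑' k : ℕ, r ^ k,
    ENNReal.mul_ne_top (ENNReal.mul_ne_top ENNReal.ofReal_ne_top measure_ball_lt_top.ne) hS, ?_⟩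
  intro y M hM
  set s : ℕ → Set E := fun k => (fun x => dist x y) ⁻¹' Icc (M / 2 ^ (k+1)) (M / 2 ^ k) with hs
  have hsm : ∀ k, MeasurableSet (s k) := fun k =>
    (continuous_id.dist continuous_const).measurable measurableSet_Icc
  have hcover : ball y M ⊆ {y} ∪ ⋃ k, s k := by
    intro x hx
    rcases eq_or_ne x y with hxy | hxy
    · exact Or.inl (by simp [hxy])
    · have hd0 : 0 < dist x y := dist_pos.2 hxy
      have hdM : dist x y < M := mem_ball.1 hx
      obtain ⟨k, hk1, hk2⟩ := exists_nat_pow_near ((one_le_div hd0).2 hdM.le) one_lt_two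
      have hq1 : (0:ℝ) < 2 ^ k := by positivity
      have hq2 : (0:ℝ) < 2 ^ (k+1) := by positivity
      refine Or.inr (mem_iUnion.2 ⟨k, mem_preimage.2 (mem_Icc.2 ⟨?_, ?_⟩)⟩)
      · rw [div_le_iff₀ hq2]
        exact le_of_lt (by rw [mul_comm]; exact (div_lt_iff₀ hd0).1 hk2)
      · rw [le_div_iff₀ hq1, mul_comm]
        exact (le_div_iff₀ hd0).1 hk1
  have hkey : ∀ k : ℕ, ∫⁻ x in s k, ENNReal.ofReal (‖x - y‖ ^ (-e)) ∂μ
      ≤ (ENNReal.ofReal ((2:ℝ) ^ e) * μ (ball (0:E) 1)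
          * ENNReal.ofReal (M ^ ((Module.finrank ℝ E : ℝ) - e))) * r ^ k := by
    intro k
    have hq1 : (0:ℝ) < 2 ^ k := by positivity
    have hq2 : (0:ℝ) < 2 ^ (k+1) := by positivity
    have hMk : (0:ℝ) < M / 2 ^ (k+1) := div_pos hM hq2
    have hMk' : (0:ℝ) ≤ M / 2 ^ k := (div_pos hM hq1).le
    calc ∫⁻ x in s k, ENNReal.ofReal (‖x - y‖ ^ (-e)) ∂μ
        ≤ ∫⁻ _x in s k, ENNReal.ofReal ((M / 2 ^ (k+1)) ^ (-e)) ∂μ := by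
          refine setLIntegral_mono' (hsm k) fun x hx => ?_
          refine ENNReal.ofReal_le_ofReal
            (Real.rpow_le_rpow_of_nonpos hMk ?_ (by linarith))
          rw [← dist_eq_norm]
          exact (mem_Icc.1 (mem_preimage.1 hx)).1
      _ = ENNReal.ofReal ((M / 2 ^ (k+1)) ^ (-e)) * μ (s k) := setLIntegral_const _ _
      _ ≤ ENNReal.ofReal ((M / 2 ^ (k+1)) ^ (-e))
          * (ENNReal.ofReal ((M / 2 ^ k) ^ Module.finrank ℝ E) * μ (ball (0:E) 1)) := by
          refine mul_le_mul_right ?_ _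
          rw [← Measure.addHaar_closedBall μ y hMk']
          exact measure_mono fun x hx => (mem_Icc.1 (mem_preimage.1 hx)).2
      _ = _ := by
          rw [← Real.rpow_natCast (M / 2 ^ k) (Module.finrank ℝ E),
            ← mul_assoc, ← ENNReal.ofReal_mul (Real.rpow_nonneg hMk.le _),
            exp_id1 M e (Module.finrank ℝ E : ℝ) hM k,
            ENNReal.ofReal_mul (by positivity), ENNReal.ofReal_mul (by positivity),
            ENNReal.ofReal_pow hr0]
          ring
  calc ∫⁻ x in ball y M, ENNReal.ofReal (‖x - y‖ ^ (-e)) ∂μ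
      ≤ ∫⁻ x in {y} ∪ ⋃ k, s k, ENNReal.ofReal (‖x - y‖ ^ (-e)) ∂μ :=
        lintegral_mono_set hcover
    _ ≤ (∫⁻ x in ({y} : Set E), ENNReal.ofReal (‖x - y‖ ^ (-e)) ∂μ)
        + ∫⁻ x in ⋃ k, s k, ENNReal.ofReal (‖x - y‖ ^ (-e)) ∂μ :=
        lintegral_union_le _ _ _
    _ ≤ 0 + ∑' k, ∫⁻ x in s k, ENNReal.ofReal (‖x - y‖ ^ (-e)) ∂μ :=
        add_le_add (le_of_eq (setLIntegral_measure_zero _ _ (measure_singleton y)))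
          (lintegral_iUnion_le _ _)
    _ ≤ 0 + ∑' k, (ENNReal.ofReal ((2:ℝ) ^ e) * μ (ball (0:E) 1)
          * ENNReal.ofReal (M ^ ((Module.finrank ℝ E : ℝ) - e))) * r ^ k :=
        add_le_add le_rfl (ENNReal.tsum_le_tsum hkey)
    _ = (ENNReal.ofReal ((2:ℝ) ^ e) * μ (ball (0:E) 1) * ∑' k : ℕ, r ^ k)
          * ENNReal.ofReal (M ^ ((Module.finrank ℝ E : ℝ) - e)) := by
        rw [zero_add, ENNReal.tsum_mul_left]
        ring

/-- Dyadic-shell bound for the integral of `‖x‖ ^ (-e)` outside a ball, `e > n`. -/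
private lemma tail_bound {e : ℝ} (he : (Module.finrank ℝ E : ℝ) < e) :
    ∃ C : ℝ≥0∞, C ≠ ⊤ ∧ ∀ M : ℝ, 0 < M →
      ∫⁻ x in (ball (0:E) M)ᶜ, ENNReal.ofReal (‖x‖ ^ (-e)) ∂μ
        ≤ C * ENNReal.ofReal (M ^ ((Module.finrank ℝ E : ℝ) - e)) := by
  have hr0 : (0:ℝ) ≤ (2:ℝ) ^ ((Module.finrank ℝ E : ℝ) - e) := Real.rpow_nonneg (by norm_num) _
  have hrlt : ENNReal.ofReal ((2:ℝ) ^ ((Module.finrank ℝ E : ℝ) - e)) < 1 := by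
    rw [ENNReal.ofReal_lt_one]
    exact Real.rpow_lt_one_of_one_lt_of_neg one_lt_two (by linarith)
  set r : ℝ≥0∞ := ENNReal.ofReal ((2:ℝ) ^ ((Module.finrank ℝ E : ℝ) - e)) with hr
  have hS : (∑' k : ℕ, r ^ k) ≠ ⊤ := by
    rw [ENNReal.tsum_geometric]
    exact ENNReal.inv_ne_top.2 (tsub_pos_of_lt hrlt).ne'
  refine ⟨ENNReal.ofReal ((2:ℝ) ^ (Module.finrank ℝ E : ℝ)) * μ (ball (0:E) 1) * ∑' k : ℕ, r ^ k,
    ENNReal.mul_ne_top (ENNReal.mul_ne_top ENNReal.ofReal_ne_top measure_ball_lt_top.ne) hS, ?_⟩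
  intro M hM
  set s : ℕ → Set E := fun k => (fun x => ‖x‖) ⁻¹' Icc (M * 2 ^ k) (M * 2 ^ (k+1)) with hs
  have hsm : ∀ k, MeasurableSet (s k) := fun k =>
    continuous_norm.measurable measurableSet_Icc
  have hcover : (ball (0:E) M)ᶜ ⊆ ⋃ k, s k := by
    intro x hx
    have hxM : M ≤ ‖x‖ := by
      simp only [mem_compl_iff, mem_ball, dist_zero_right, not_lt] at hx
      exact hx
    obtain ⟨k, hk1, hk2⟩ := exists_nat_pow_near ((one_le_div hM).2 hxM) one_lt_two
    refine mem_iUnion.2 ⟨k, mem_preimage.2 (mem_Icc.2 ⟨?_, ?_⟩)⟩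
    · rw [mul_comm]
      exact (le_div_iff₀ hM).1 hk1
    · exact le_of_lt (by rw [mul_comm]; exact (div_lt_iff₀ hM).1 hk2)
  have hkey : ∀ k : ℕ, ∫⁻ x in s k, ENNReal.ofReal (‖x‖ ^ (-e)) ∂μ
      ≤ (ENNReal.ofReal ((2:ℝ) ^ (Module.finrank ℝ E : ℝ)) * μ (ball (0:E) 1)
          * ENNReal.ofReal (M ^ ((Module.finrank ℝ E : ℝ) - e))) * r ^ k := by
    intro k
    have hq1 : (0:ℝ) < 2 ^ k := by positivity
    have hq2 : (0:ℝ) < 2 ^ (k+1) := by positivity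
    have hMk : (0:ℝ) < M * 2 ^ k := mul_pos hM hq1
    have hMk' : (0:ℝ) ≤ M * 2 ^ (k+1) := (mul_pos hM hq2).le
    calc ∫⁻ x in s k, ENNReal.ofReal (‖x‖ ^ (-e)) ∂μ
        ≤ ∫⁻ _x in s k, ENNReal.ofReal ((M * 2 ^ k) ^ (-e)) ∂μ := by
          refine setLIntegral_mono' (hsm k) fun x hx => ?_
          exact ENNReal.ofReal_le_ofReal
            (Real.rpow_le_rpow_of_nonpos hMk (mem_Icc.1 (mem_preimage.1 hx)).1 (by linarith))
      _ = ENNReal.ofReal ((M * 2 ^ k) ^ (-e)) * μ (s k) := setLIntegral_const _ _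
      _ ≤ ENNReal.ofReal ((M * 2 ^ k) ^ (-e))
          * (ENNReal.ofReal ((M * 2 ^ (k+1)) ^ Module.finrank ℝ E) * μ (ball (0:E) 1)) := by
          refine mul_le_mul_right ?_ _
          rw [← Measure.addHaar_closedBall μ 0 hMk']
          refine measure_mono fun x hx => ?_
          have := (mem_Icc.1 (mem_preimage.1 hx)).2
          simpa [mem_closedBall, dist_zero_right] using this
      _ = _ := by
          rw [← Real.rpow_natCast (M * 2 ^ (k+1)) (Module.finrank ℝ E),
            ← mul_assoc, ← ENNReal.ofReal_mul (Real.rpow_nonneg hMk.le _),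
            exp_id2 M e (Module.finrank ℝ E : ℝ) hM k,
            ENNReal.ofReal_mul (by positivity), ENNReal.ofReal_mul (by positivity),
            ENNReal.ofReal_pow hr0]
          ring
  calc ∫⁻ x in (ball (0:E) M)ᶜ, ENNReal.ofReal (‖x‖ ^ (-e)) ∂μ
      ≤ ∫⁻ x in ⋃ k, s k, ENNReal.ofReal (‖x‖ ^ (-e)) ∂μ := lintegral_mono_set hcover
    _ ≤ ∑' k, ∫⁻ x in s k, ENNReal.ofReal (‖x‖ ^ (-e)) ∂μ := lintegral_iUnion_le _ _
    _ ≤ ∑' k, (ENNReal.ofReal ((2:ℝ) ^ (Module.finrank ℝ E : ℝ)) * μ (ball (0:E) 1)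
          * ENNReal.ofReal (M ^ ((Module.finrank ℝ E : ℝ) - e))) * r ^ k :=
        ENNReal.tsum_le_tsum hkey
    _ = (ENNReal.ofReal ((2:ℝ) ^ (Module.finrank ℝ E : ℝ)) * μ (ball (0:E) 1)
          * ∑' k : ℕ, r ^ k) * ENNReal.ofReal (M ^ ((Module.finrank ℝ E : ℝ) - e)) := by
        rw [ENNReal.tsum_mul_left]
        ring

/-- Kernel estimate: `∫ ‖x-y‖^{-a} (1+‖x‖)^{-b} dx ≲ (1+‖y‖)^{n-a-b}`. -/
private lemma kernel_bound {a b : ℝ} (ha0 : 0 < a) (han : a < (Module.finrank ℝ E : ℝ))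
    (hb0 : 0 < b) (hbn : b < (Module.finrank ℝ E : ℝ))
    (hab : (Module.finrank ℝ E : ℝ) < a + b) :
    ∃ C : ℝ≥0∞, C ≠ ⊤ ∧ ∀ y : E,
      ∫⁻ x, ENNReal.ofReal (‖x - y‖ ^ (-a)) * ENNReal.ofReal ((1 + ‖x‖) ^ (-b)) ∂μ
        ≤ C * ENNReal.ofReal ((1 + ‖y‖) ^ ((Module.finrank ℝ E : ℝ) - a - b)) := by
  set d : ℝ := (Module.finrank ℝ E : ℝ) with hd
  obtain ⟨C₁, hC₁, H₁⟩ := shell_bound μ ha0 han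
  obtain ⟨C₂, hC₂, H₂⟩ := shell_bound μ hb0 hbn
  obtain ⟨C₃, hC₃, H₃⟩ := tail_bound μ hab
  refine ⟨C₁ * ENNReal.ofReal ((2:ℝ) ^ (a + b - d))
      + C₂ * ENNReal.ofReal ((2:ℝ) ^ (d - b + a))
      + ENNReal.ofReal ((2:ℝ) ^ a) * C₃ * ENNReal.ofReal ((2:ℝ) ^ (d - a - b)),
    by
      refine ENNReal.add_ne_top.2 ⟨ENNReal.add_ne_top.2 ⟨?_, ?_⟩, ?_⟩
      · exact ENNReal.mul_ne_top hC₁ ENNReal.ofReal_ne_top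
      · exact ENNReal.mul_ne_top hC₂ ENNReal.ofReal_ne_top
      · exact ENNReal.mul_ne_top (ENNReal.mul_ne_top ENNReal.ofReal_ne_top hC₃)
          ENNReal.ofReal_ne_top, ?_⟩
  intro y
  set t : ℝ := 1 + ‖y‖ with ht
  have ht0 : 0 < t := by have := norm_nonneg y; simp only [ht]; linarith
  set R : ℝ := t / 2 with hR
  set M : ℝ := 2 * t with hM
  have hR0 : 0 < R := by positivity
  have hM0 : 0 < M := by positivity
  set f : E → ℝ≥0∞ := fun x =>
    ENNReal.ofReal (‖x - y‖ ^ (-a)) * ENNReal.ofReal ((1 + ‖x‖) ^ (-b)) with hf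
  have hfm : Measurable f :=
    (((measurable_id.sub measurable_const).norm.pow_const _).ennreal_ofReal).mul
      ((measurable_norm.const_add 1).pow_const _).ennreal_ofReal
  -- Region A : the ball around y
  have hTA : ∫⁻ x in ball y R, f x ∂μ
      ≤ C₁ * ENNReal.ofReal ((2:ℝ) ^ (a + b - d)) * ENNReal.ofReal (t ^ (d - a - b)) := by
    have step1 : ∫⁻ x in ball y R, f x ∂μ
        ≤ ∫⁻ x in ball y R, ENNReal.ofReal (‖x - y‖ ^ (-a)) * ENNReal.ofReal (R ^ (-b)) ∂μ := by
      refine setLIntegral_mono' measurableSet_ball fun x hx => ?_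
      refine mul_le_mul_right (ENNReal.ofReal_le_ofReal
        (Real.rpow_le_rpow_of_nonpos hR0 ?_ (by linarith))) _
      have h1 : ‖y‖ - ‖y - x‖ ≤ ‖x‖ := by
        have := norm_sub_norm_le y (y - x)
        simpa using this
      have h2 : ‖y - x‖ = ‖x - y‖ := norm_sub_rev y x
      have h3 : ‖x - y‖ < R := by rw [← dist_eq_norm]; exact mem_ball.1 hx
      simp only [hR, ht] at h3 ⊢
      linarith
    have step2 : ∫⁻ x in ball y R, ENNReal.ofReal (‖x - y‖ ^ (-a))
          * ENNReal.ofReal (R ^ (-b)) ∂μ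
        = (∫⁻ x in ball y R, ENNReal.ofReal (‖x - y‖ ^ (-a)) ∂μ) * ENNReal.ofReal (R ^ (-b)) :=
      lintegral_mul_const' _ _ ENNReal.ofReal_ne_top
    calc ∫⁻ x in ball y R, f x ∂μ
        ≤ (∫⁻ x in ball y R, ENNReal.ofReal (‖x - y‖ ^ (-a)) ∂μ) * ENNReal.ofReal (R ^ (-b)) := by
          rw [← step2]; exact step1
      _ ≤ C₁ * ENNReal.ofReal (R ^ (d - a)) * ENNReal.ofReal (R ^ (-b)) :=
          mul_le_mul_left (H₁ y R hR0) _
      _ = C₁ * ENNReal.ofReal (R ^ (d - a) * R ^ (-b)) := by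
          rw [mul_assoc, ← ENNReal.ofReal_mul (Real.rpow_nonneg hR0.le _)]
      _ = _ := by
          rw [← Real.rpow_add hR0, mul_assoc, ← ENNReal.ofReal_mul (by positivity)]
          congr 2
          have : R ^ (d - a + -b) = (t / 2) ^ (d - a - b) * (2 * t) ^ (0:ℝ) := by
            rw [Real.rpow_zero, mul_one, hR, show d - a + -b = d - a - b from by ring]
          rw [this, exp_id3 t (d - a - b) 0 ht0]
          ring_nf
  -- Region B : outside the ball around y, inside ball 0 M
  have hTB : ∫⁻ x in ball (0:E) M ∩ (ball y R)ᶜ, f x ∂μ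
      ≤ C₂ * ENNReal.ofReal ((2:ℝ) ^ (d - b + a)) * ENNReal.ofReal (t ^ (d - a - b)) := by
    have hae : ∀ᵐ x ∂μ.restrict (ball (0:E) M ∩ (ball y R)ᶜ),
        f x ≤ ENNReal.ofReal (R ^ (-a)) * ENNReal.ofReal (‖x - 0‖ ^ (-b)) := by
      have h0 : ∀ᵐ x ∂μ, x ≠ (0:E) := by
        rw [ae_iff]
        simpa using measure_singleton (0:E)
      filter_upwards [ae_restrict_mem ((measurableSet_ball).inter
        (measurableSet_ball.compl)), ae_restrict_of_ae h0] with x hx hx0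
      have hxA : R ≤ ‖x - y‖ := by
        have := hx.2
        simp only [mem_compl_iff, mem_ball, dist_eq_norm, not_lt] at this
        exact this
      have hx0' : 0 < ‖x‖ := norm_pos_iff.2 hx0
      refine mul_le_mul'
        (ENNReal.ofReal_le_ofReal (Real.rpow_le_rpow_of_nonpos hR0 hxA (by linarith)))
        (ENNReal.ofReal_le_ofReal ?_)
      rw [sub_zero]
      exact Real.rpow_le_rpow_of_nonpos hx0' (by linarith [norm_nonneg x]) (by linarith)
    calc ∫⁻ x in ball (0:E) M ∩ (ball y R)ᶜ, f x ∂μ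
        ≤ ∫⁻ x in ball (0:E) M ∩ (ball y R)ᶜ,
            ENNReal.ofReal (R ^ (-a)) * ENNReal.ofReal (‖x - 0‖ ^ (-b)) ∂μ :=
          lintegral_mono_ae hae
      _ = ENNReal.ofReal (R ^ (-a))
            * ∫⁻ x in ball (0:E) M ∩ (ball y R)ᶜ, ENNReal.ofReal (‖x - 0‖ ^ (-b)) ∂μ :=
          lintegral_const_mul' _ _ ENNReal.ofReal_ne_top
      _ ≤ ENNReal.ofReal (R ^ (-a))
            * ∫⁻ x in ball (0:E) M, ENNReal.ofReal (‖x - 0‖ ^ (-b)) ∂μ :=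
          mul_le_mul_right (lintegral_mono_set inter_subset_left) _
      _ ≤ ENNReal.ofReal (R ^ (-a)) * (C₂ * ENNReal.ofReal (M ^ (d - b))) :=
          mul_le_mul_right (H₂ 0 M hM0) _
      _ = _ := by
          rw [← mul_assoc, mul_comm (ENNReal.ofReal (R ^ (-a))) C₂, mul_assoc,
            ← ENNReal.ofReal_mul (Real.rpow_nonneg hR0.le _), mul_assoc,
            ← ENNReal.ofReal_mul (by positivity)]
          congr 2
          have : R ^ (-a) * M ^ (d - b) = (t / 2) ^ (-a) * (2 * t) ^ (d - b) := rfl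
          rw [this, exp_id3 t (-a) (d - b) ht0]
          ring_nf
  -- Region C : outside ball 0 M
  have hTC : ∫⁻ x in (ball (0:E) M)ᶜ ∩ (ball y R)ᶜ, f x ∂μ
      ≤ ENNReal.ofReal ((2:ℝ) ^ a) * C₃ * ENNReal.ofReal ((2:ℝ) ^ (d - a - b))
          * ENNReal.ofReal (t ^ (d - a - b)) := by
    have hstep : ∫⁻ x in (ball (0:E) M)ᶜ ∩ (ball y R)ᶜ, f x ∂μ
        ≤ ∫⁻ x in (ball (0:E) M)ᶜ ∩ (ball y R)ᶜ,
            ENNReal.ofReal ((2:ℝ) ^ a) * ENNReal.ofReal (‖x‖ ^ (-(a + b))) ∂μ := by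
      refine setLIntegral_mono' ((measurableSet_ball.compl).inter
        (measurableSet_ball.compl)) fun x hx => ?_
      have hxM : M ≤ ‖x‖ := by
        have := hx.1
        simp only [mem_compl_iff, mem_ball, dist_zero_right, not_lt] at this
        exact this
      have hx0 : 0 < ‖x‖ := lt_of_lt_of_le hM0 hxM
      have hyt : ‖y‖ ≤ t := by simp only [ht]; linarith [norm_nonneg y]
      have hxy : ‖x‖ / 2 ≤ ‖x - y‖ := by
        have h1 : ‖x‖ - ‖y‖ ≤ ‖x - y‖ := norm_sub_norm_le x y
        have h2 : 2 * t ≤ ‖x‖ := hxM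
        linarith
      have r1 : ‖x - y‖ ^ (-a) ≤ (‖x‖ / 2) ^ (-a) :=
        Real.rpow_le_rpow_of_nonpos (by positivity) hxy (by linarith)
      have r2 : (1 + ‖x‖) ^ (-b) ≤ ‖x‖ ^ (-b) :=
        Real.rpow_le_rpow_of_nonpos hx0 (by linarith) (by linarith)
      calc f x ≤ ENNReal.ofReal ((‖x‖ / 2) ^ (-a)) * ENNReal.ofReal (‖x‖ ^ (-b)) :=
            mul_le_mul' (ENNReal.ofReal_le_ofReal r1) (ENNReal.ofReal_le_ofReal r2)
        _ = ENNReal.ofReal ((‖x‖ / 2) ^ (-a) * ‖x‖ ^ (-b)) :=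
            (ENNReal.ofReal_mul (Real.rpow_nonneg (by positivity) _)).symm
        _ = ENNReal.ofReal ((2:ℝ) ^ a * ‖x‖ ^ (-(a + b))) := by rw [exp_id4 _ _ _ hx0]
        _ = ENNReal.ofReal ((2:ℝ) ^ a) * ENNReal.ofReal (‖x‖ ^ (-(a + b))) :=
            ENNReal.ofReal_mul (by positivity)
    calc ∫⁻ x in (ball (0:E) M)ᶜ ∩ (ball y R)ᶜ, f x ∂μ
        ≤ ∫⁻ x in (ball (0:E) M)ᶜ ∩ (ball y R)ᶜ,
            ENNReal.ofReal ((2:ℝ) ^ a) * ENNReal.ofReal (‖x‖ ^ (-(a + b))) ∂μ := hstep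
      _ = ENNReal.ofReal ((2:ℝ) ^ a)
            * ∫⁻ x in (ball (0:E) M)ᶜ ∩ (ball y R)ᶜ, ENNReal.ofReal (‖x‖ ^ (-(a + b))) ∂μ :=
          lintegral_const_mul' _ _ ENNReal.ofReal_ne_top
      _ ≤ ENNReal.ofReal ((2:ℝ) ^ a)
            * ∫⁻ x in (ball (0:E) M)ᶜ, ENNReal.ofReal (‖x‖ ^ (-(a + b))) ∂μ :=
          mul_le_mul_right (lintegral_mono_set inter_subset_left) _
      _ ≤ ENNReal.ofReal ((2:ℝ) ^ a) * (C₃ * ENNReal.ofReal (M ^ (d - (a + b)))) :=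
          mul_le_mul_right (H₃ M hM0) _
      _ = _ := by
          rw [← mul_assoc, mul_assoc (ENNReal.ofReal ((2:ℝ) ^ a) * C₃),
            ← ENNReal.ofReal_mul (by positivity)]
          congr 2
          have h1 : M ^ (d - (a + b)) = (t / 2) ^ (0:ℝ) * (2 * t) ^ (d - (a + b)) := by
            rw [Real.rpow_zero, one_mul]
          rw [h1, exp_id3 t 0 (d - (a + b)) ht0]
          ring_nf
  -- put the three regions together
  have hsplit : ∫⁻ x, f x ∂μ
      = (∫⁻ x in ball y R, f x ∂μ)
        + ((∫⁻ x in ball (0:E) M ∩ (ball y R)ᶜ, f x ∂μ)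
          + ∫⁻ x in (ball (0:E) M)ᶜ ∩ (ball y R)ᶜ, f x ∂μ) := by
    rw [← lintegral_add_compl (f) (measurableSet_ball (x := y) (ε := R))]
    congr 1
    rw [← lintegral_add_compl (μ := μ.restrict (ball y R)ᶜ) (f)
      (measurableSet_ball (x := (0:E)) (ε := M)),
      Measure.restrict_restrict measurableSet_ball,
      Measure.restrict_restrict measurableSet_ball.compl]
  rw [hsplit]
  calc (∫⁻ x in ball y R, f x ∂μ)
        + ((∫⁻ x in ball (0:E) M ∩ (ball y R)ᶜ, f x ∂μ)
          + ∫⁻ x in (ball (0:E) M)ᶜ ∩ (ball y R)ᶜ, f x ∂μ)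
      ≤ C₁ * ENNReal.ofReal ((2:ℝ) ^ (a + b - d)) * ENNReal.ofReal (t ^ (d - a - b))
        + (C₂ * ENNReal.ofReal ((2:ℝ) ^ (d - b + a)) * ENNReal.ofReal (t ^ (d - a - b))
          + ENNReal.ofReal ((2:ℝ) ^ a) * C₃ * ENNReal.ofReal ((2:ℝ) ^ (d - a - b))
            * ENNReal.ofReal (t ^ (d - a - b))) :=
        add_le_add hTA (add_le_add hTB hTC)
    _ = _ := by ring
end Aux

/-- Growth estimate for the Riesz potential `v(x) = ∫ |y|^{-α}u(y)^p|x-y|^{-(n-2σ)} dy`: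
if `∫ |y|^{-α}u(y)^p(1+|y|)^{-γ} dy < ∞` for every `γ > n - 2σ + (α-2σ)/(p-1)`,
then `∫ v(x)(1+|x|)^{-q} dx < ∞` for every `q > n + (α-2σ)/(p-1)`. -/
theorem riesz_potential_growth (n : ℕ) (hn : 1 ≤ n) (σ α p : ℝ)
    (hσ : 0 < σ) (hσ2 : σ < (n : ℝ) / 2) (hα : α < 2 * σ)
    (hp1 : 1 < p) (hp2 : ((n : ℝ) - α) / ((n : ℝ) - 2 * σ) ≤ p)
    (u : EuclideanSpace ℝ (Fin n) → ℝ) (hm : Measurable u) (hnn : ∀ y, 0 ≤ u y)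
    (hint : ∀ γ : ℝ, (n : ℝ) - 2 * σ + (α - 2 * σ) / (p - 1) < γ →
      (∫⁻ y, ENNReal.ofReal (‖y‖ ^ (-α) * u y ^ p * (1 + ‖y‖) ^ (-γ))) < ⊤) :
    ∀ q : ℝ, (n : ℝ) + (α - 2 * σ) / (p - 1) < q →
      (∫⁻ x, (∫⁻ y, ENNReal.ofReal
          (‖y‖ ^ (-α) * u y ^ p * ‖x - y‖ ^ (-((n : ℝ) - 2 * σ)))) *
        ENNReal.ofReal ((1 + ‖x‖) ^ (-q))) < ⊤ := by
  intro q hq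
  have hfr : Module.finrank ℝ (EuclideanSpace ℝ (Fin n)) = n := finrank_euclideanSpace_fin
  haveI : Nontrivial (EuclideanSpace ℝ (Fin n)) := by
    refine Module.nontrivial_of_finrank_pos (R := ℝ) (M := (EuclideanSpace ℝ (Fin n))) ?_
    rw [hfr]; omega
  -- numerical setup
  have hp0 : 0 < p - 1 := by linarith
  have hn2σ : 0 < (n:ℝ) - 2 * σ := by linarith
  set δ : ℝ := (α - 2 * σ) / (p - 1) with hδ
  have hδlow : -((n:ℝ) - 2 * σ) ≤ δ := by
    rw [hδ, le_div_iff₀ hp0]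
    have hnα : (n:ℝ) - α ≤ p * ((n:ℝ) - 2 * σ) := (div_le_iff₀ hn2σ).1 hp2
    nlinarith
  set b : ℝ := ((n:ℝ) + δ + min q n) / 2 with hb
  have hmin : (n:ℝ) + δ < min q n := by
    refine lt_min hq ?_
    have hδneg : δ < 0 := div_neg_of_neg_of_pos (by linarith) hp0
    linarith
  have hb1 : (n:ℝ) + δ < b := by
    rw [hb]; linarith
  have hbq : b ≤ q := by
    rw [hb]
    have := min_le_left q (n:ℝ)
    linarith
  have hbn : b < (n:ℝ) := by
    rw [hb]
    have := min_le_right q (n:ℝ)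
    linarith
  have hb0 : 0 < b := by linarith
  set a : ℝ := (n:ℝ) - 2 * σ with ha
  have ha0 : 0 < a := hn2σ
  have han : a < (n:ℝ) := by rw [ha]; linarith
  have hab : (n:ℝ) < a + b := by
    have : 2 * σ ≤ (n:ℝ) + δ := by linarith
    rw [ha]; linarith
  have han' : a < (Module.finrank ℝ (EuclideanSpace ℝ (Fin n)) : ℝ) := by rw [hfr]; exact han
  have hbn' : b < (Module.finrank ℝ (EuclideanSpace ℝ (Fin n)) : ℝ) := by rw [hfr]; exact hbn
  have hab' : (Module.finrank ℝ (EuclideanSpace ℝ (Fin n)) : ℝ) < a + b := by rw [hfr]; exact hab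
  obtain ⟨C, hC, hK⟩ := kernel_bound (E := (EuclideanSpace ℝ (Fin n))) volume ha0 han' hb0 hbn' hab'
  simp only [hfr] at hK
  set γ : ℝ := a + b - n with hγ
  have hγ' : (n:ℝ) - 2 * σ + (α - 2 * σ) / (p - 1) < γ := by
    rw [hγ, ha]
    have : δ = (α - 2 * σ) / (p - 1) := rfl
    linarith [hb1]
  -- measurability of the full integrand on the product space
  have hFm : Measurable (fun z : (EuclideanSpace ℝ (Fin n)) × (EuclideanSpace ℝ (Fin n)) =>
      ENNReal.ofReal (‖z.2‖ ^ (-α) * u z.2 ^ p * ‖z.1 - z.2‖ ^ (-a))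
        * ENNReal.ofReal ((1 + ‖z.1‖) ^ (-q))) := by
    have m1 : Measurable fun z : (EuclideanSpace ℝ (Fin n)) × (EuclideanSpace ℝ (Fin n)) => ‖z.2‖ ^ (-α) :=
      measurable_snd.norm.pow_const _
    have m2 : Measurable fun z : (EuclideanSpace ℝ (Fin n)) × (EuclideanSpace ℝ (Fin n)) => u z.2 ^ p :=
      Measurable.pow_const (f := fun z : (EuclideanSpace ℝ (Fin n)) × (EuclideanSpace ℝ (Fin n)) => u z.2) (hm.comp measurable_snd) p
    have m3 : Measurable fun z : (EuclideanSpace ℝ (Fin n)) × (EuclideanSpace ℝ (Fin n)) => ‖z.1 - z.2‖ ^ (-a) :=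
      (measurable_fst.sub measurable_snd).norm.pow_const _
    have m4 : Measurable fun z : (EuclideanSpace ℝ (Fin n)) × (EuclideanSpace ℝ (Fin n)) => (1 + ‖z.1‖) ^ (-q) :=
      (measurable_fst.norm.const_add 1).pow_const _
    exact (((m1.mul m2).mul m3).ennreal_ofReal).mul m4.ennreal_ofReal
  have hAnn : ∀ y : (EuclideanSpace ℝ (Fin n)), 0 ≤ ‖y‖ ^ (-α) * u y ^ p :=
    fun y => mul_nonneg (Real.rpow_nonneg (norm_nonneg y) (-α))
      (Real.rpow_nonneg (hnn y) p)
  calc (∫⁻ x, (∫⁻ y, ENNReal.ofReal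
          (‖y‖ ^ (-α) * u y ^ p * ‖x - y‖ ^ (-((n : ℝ) - 2 * σ)))) *
        ENNReal.ofReal ((1 + ‖x‖) ^ (-q)))
      = ∫⁻ x, ∫⁻ y, ENNReal.ofReal (‖y‖ ^ (-α) * u y ^ p * ‖x - y‖ ^ (-a))
          * ENNReal.ofReal ((1 + ‖x‖) ^ (-q)) := by
        refine lintegral_congr fun x => ?_
        rw [lintegral_mul_const' _ _ ENNReal.ofReal_ne_top]
    _ = ∫⁻ y, ∫⁻ x, ENNReal.ofReal (‖y‖ ^ (-α) * u y ^ p * ‖x - y‖ ^ (-a))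
          * ENNReal.ofReal ((1 + ‖x‖) ^ (-q)) :=
        lintegral_lintegral_swap hFm.aemeasurable
    _ ≤ ∫⁻ y, C * ENNReal.ofReal (‖y‖ ^ (-α) * u y ^ p * (1 + ‖y‖) ^ (-γ)) := by
        refine lintegral_mono fun y => ?_
        calc ∫⁻ x, ENNReal.ofReal (‖y‖ ^ (-α) * u y ^ p * ‖x - y‖ ^ (-a))
              * ENNReal.ofReal ((1 + ‖x‖) ^ (-q))
            = ENNReal.ofReal (‖y‖ ^ (-α) * u y ^ p)
              * ∫⁻ x, ENNReal.ofReal (‖x - y‖ ^ (-a))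
                  * ENNReal.ofReal ((1 + ‖x‖) ^ (-q)) := by
              rw [← lintegral_const_mul' _ _ ENNReal.ofReal_ne_top]
              refine lintegral_congr fun x => ?_
              rw [ENNReal.ofReal_mul (hAnn y), mul_assoc]
          _ ≤ ENNReal.ofReal (‖y‖ ^ (-α) * u y ^ p)
              * ∫⁻ x, ENNReal.ofReal (‖x - y‖ ^ (-a))
                  * ENNReal.ofReal ((1 + ‖x‖) ^ (-b)) := by
              refine mul_le_mul_right (lintegral_mono fun x => mul_le_mul_right
                (ENNReal.ofReal_le_ofReal ?_) _) _
              exact Real.rpow_le_rpow_of_exponent_le (by linarith [norm_nonneg x])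
                (by linarith)
          _ ≤ ENNReal.ofReal (‖y‖ ^ (-α) * u y ^ p)
              * (C * ENNReal.ofReal ((1 + ‖y‖) ^ ((n:ℝ) - a - b))) :=
              mul_le_mul_right (hK y) _
          _ = C * ENNReal.ofReal (‖y‖ ^ (-α) * u y ^ p * (1 + ‖y‖) ^ (-γ)) := by
              rw [show (n:ℝ) - a - b = -γ by rw [hγ]; ring,
                ENNReal.ofReal_mul (hAnn y)]
              ring
    _ = C * ∫⁻ y, ENNReal.ofReal (‖y‖ ^ (-α) * u y ^ p * (1 + ‖y‖) ^ (-γ)) :=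
        lintegral_const_mul' _ _ hC
    _ < ⊤ := ENNReal.mul_lt_top hC.lt_top (hint γ hγ')
end

section
/- Let n ≥ 1, σ ∈ (0, n/2), α ∈ [0, 2σ), and 0 < p ≤ (n + 2σ - 2α)/(n - 2σ). Suppose u : ℝⁿ \ {0} → (0, ∞) is continuous, satisfies u(x) = ∫_{ℝⁿ} u(y)^p |y|^{-α}|x-y|^{-(n-2σ)} dy for all x ≠ 0, and suppose that for every x ∈ ℝⁿ \ {0}, every 0 < λ < |x|, and every y with |y - x| ≥ λ, y ≠ 0, one has (λ/|y-x|)^{n-2σ} u(x + λ²(y-x)/|y-x|²) ≤ u(y). Then for every unit vector e ∈ ℝⁿ, every a > 0, and every z ≠ 0 with z·e < a, we have u(z) ≥ u(z - 2(z·e - a)e); consequently u is radially symmetric about the origin and nonincreasing in |x|. -/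
open MeasureTheory RealInnerProductSpace

section AuxLemmas
open Filter


set_option maxHeartbeats 1000000 in
lemma reflect_aux {n : ℕ} {σ : ℝ} (u : EuclideanSpace ℝ (Fin n) → ℝ)
    (hc : ContinuousOn u {(0 : EuclideanSpace ℝ (Fin n))}ᶜ)
    (hms : ∀ x : EuclideanSpace ℝ (Fin n), x ≠ 0 → ∀ l : ℝ, 0 < l → l < ‖x‖ →
      ∀ y : EuclideanSpace ℝ (Fin n), l ≤ ‖y - x‖ → y ≠ 0 →
        (l / ‖y - x‖) ^ ((n : ℝ) - 2 * σ) *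
          u (x + (l ^ 2 / ‖y - x‖ ^ 2) • (y - x)) ≤ u y)
    (e : EuclideanSpace ℝ (Fin n)) (he : ‖e‖ = 1) (a : ℝ) (ha : 0 < a)
    (z : EuclideanSpace ℝ (Fin n)) (hz : z ≠ 0) (hza : ⟪z, e⟫ < a) :
    u (z - (2 * (⟪z, e⟫ - a)) • e) ≤ u z := by
  set t := ⟪z, e⟫ with htdef
  set w : EuclideanSpace ℝ (Fin n) := z - (2 * (t - a)) • e with hwdef
  have he0 : e ≠ 0 := by intro h; simp [h] at he
  have hee : ⟪e, e⟫ = 1 := by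
    rw [real_inner_self_eq_norm_sq, he]; norm_num
  have hwe : ⟪w, e⟫ = 2 * a - t := by
    rw [hwdef, inner_sub_left, real_inner_smul_left, hee, ← htdef]; ring
  have hw0 : w ≠ 0 := by
    intro h
    rw [h, inner_zero_left] at hwe; linarith
  -- distance squared formula
  have hD : ∀ R : ℝ, ‖z - R • e‖ ^ 2 = ‖z‖ ^ 2 - 2 * R * t + R ^ 2 := by
    intro R
    rw [norm_sub_sq_real, real_inner_smul_right, norm_smul, he, Real.norm_eq_abs,
      mul_one, sq_abs, ← htdef]
    ring
  have hinv : Tendsto (fun R : ℝ => R⁻¹) atTop (nhds 0) := tendsto_inv_atTop_zero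
  have hnormpos : ∀ᶠ R : ℝ in atTop, 0 < ‖z - R • e‖ ∧ ‖R • e‖ = R ∧ 0 < R - a := by
    filter_upwards [eventually_gt_atTop (max ‖z‖ a)] with R hR
    have h1 : ‖z‖ < R := lt_of_le_of_lt (le_max_left _ _) hR
    have h2 : a < R := lt_of_le_of_lt (le_max_right _ _) hR
    have hR0 : (0:ℝ) ≤ R := by linarith [ha.le]
    have hRe : ‖R • e‖ = R := by
      rw [norm_smul, he, Real.norm_eq_abs, abs_of_nonneg hR0]; ring
    refine ⟨?_, hRe, by linarith⟩
    have h3 := norm_sub_norm_le (R • e) z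
    rw [hRe, norm_sub_rev] at h3
    linarith
  -- limit of c R := (R-a)^2 / ‖z - R•e‖^2
  have hden : Tendsto (fun R : ℝ => ‖z‖ ^ 2 * R⁻¹ ^ 2 - 2 * t * R⁻¹ + 1) atTop (nhds 1) := by
    have h : Tendsto (fun R : ℝ => ‖z‖ ^ 2 * R⁻¹ ^ 2 - 2 * t * R⁻¹ + 1) atTop
        (nhds (‖z‖ ^ 2 * 0 ^ 2 - 2 * t * 0 + 1)) :=
      (((tendsto_const_nhds.mul (hinv.pow 2)).sub
        (tendsto_const_nhds.mul hinv)).add tendsto_const_nhds)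
    simpa using h
  have hceq : ∀ᶠ R : ℝ in atTop,
      (R - a) ^ 2 / ‖z - R • e‖ ^ 2 =
        (1 - a * R⁻¹) ^ 2 / (‖z‖ ^ 2 * R⁻¹ ^ 2 - 2 * t * R⁻¹ + 1) := by
    filter_upwards [hnormpos, eventually_gt_atTop (0:ℝ)] with R hR hR0
    have hpos1 : 0 < ‖z - R • e‖ ^ 2 := pow_pos hR.1 2
    rw [hD R] at hpos1 ⊢
    have hd2 : ‖z‖ ^ 2 * R⁻¹ ^ 2 - 2 * t * R⁻¹ + 1 =
        (‖z‖ ^ 2 - 2 * R * t + R ^ 2) * (R⁻¹) ^ 2 := by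
      field_simp
    have hd2pos : 0 < ‖z‖ ^ 2 * R⁻¹ ^ 2 - 2 * t * R⁻¹ + 1 := by
      rw [hd2]; positivity
    rw [div_eq_div_iff (ne_of_gt hpos1) (ne_of_gt hd2pos)]
    field_simp
  have hclim : Tendsto (fun R : ℝ => (R - a) ^ 2 / ‖z - R • e‖ ^ 2) atTop (nhds 1) := by
    have hnum : Tendsto (fun R : ℝ => (1 - a * R⁻¹) ^ 2) atTop (nhds 1) := by
      have h : Tendsto (fun R : ℝ => (1 - a * R⁻¹) ^ 2) atTop (nhds ((1 - a * 0) ^ 2)) :=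
        ((tendsto_const_nhds.sub (tendsto_const_nhds.mul hinv)).pow 2)
      simpa using h
    have h := hnum.div hden one_ne_zero
    simp only [div_one] at h
    exact h.congr' (hceq.mono fun R hh => hh.symm)
  -- limit of R * (1 - c R)
  have hqeq : ∀ᶠ R : ℝ in atTop,
      R * (1 - (R - a) ^ 2 / ‖z - R • e‖ ^ 2) =
        ((‖z‖ ^ 2 - a ^ 2) * R⁻¹ + 2 * (a - t)) /
          (‖z‖ ^ 2 * R⁻¹ ^ 2 - 2 * t * R⁻¹ + 1) := by
    filter_upwards [hnormpos, eventually_gt_atTop (0:ℝ)] with R hR hR0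
    have hpos1 : 0 < ‖z - R • e‖ ^ 2 := pow_pos hR.1 2
    rw [hD R] at hpos1 ⊢
    have hd2 : ‖z‖ ^ 2 * R⁻¹ ^ 2 - 2 * t * R⁻¹ + 1 =
        (‖z‖ ^ 2 - 2 * R * t + R ^ 2) * (R⁻¹) ^ 2 := by
      field_simp
    have hd2pos : 0 < ‖z‖ ^ 2 * R⁻¹ ^ 2 - 2 * t * R⁻¹ + 1 := by
      rw [hd2]; positivity
    rw [eq_div_iff (ne_of_gt hd2pos), hd2]
    have hne := ne_of_gt hpos1
    rw [one_sub_div hne, mul_div_assoc', div_mul_eq_mul_div, mul_div_assoc, mul_div_cancel_left₀ _ hne]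
    field_simp
    ring
  have hqlim : Tendsto (fun R : ℝ => R * (1 - (R - a) ^ 2 / ‖z - R • e‖ ^ 2)) atTop
      (nhds (2 * (a - t))) := by
    have hnum : Tendsto (fun R : ℝ => (‖z‖ ^ 2 - a ^ 2) * R⁻¹ + 2 * (a - t)) atTop
        (nhds (2 * (a - t))) := by
      have h : Tendsto (fun R : ℝ => (‖z‖ ^ 2 - a ^ 2) * R⁻¹ + 2 * (a - t)) atTop
          (nhds ((‖z‖ ^ 2 - a ^ 2) * 0 + 2 * (a - t))) :=
        (tendsto_const_nhds.mul hinv).add tendsto_const_nhds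
      simpa using h
    have h := hnum.div hden one_ne_zero
    simp only [div_one] at h
    exact h.congr' (hqeq.mono fun R hh => hh.symm)
  -- the Kelvin point tends to w
  have hp_tendsto : Tendsto
      (fun R : ℝ => R • e + ((R - a) ^ 2 / ‖z - R • e‖ ^ 2) • (z - R • e)) atTop (nhds w) := by
    have h1 : Tendsto (fun R : ℝ => ((R - a) ^ 2 / ‖z - R • e‖ ^ 2) • z +
        (R * (1 - (R - a) ^ 2 / ‖z - R • e‖ ^ 2)) • e) atTop
        (nhds ((1:ℝ) • z + (2 * (a - t)) • e)) :=
      (hclim.smul_const z).add (hqlim.smul_const e)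
    have hwid : (1:ℝ) • z + (2 * (a - t)) • e = w := by rw [hwdef]; module
    rw [hwid] at h1
    refine h1.congr fun R => ?_
    module
  -- limit of the prefactor
  have hbase : Tendsto (fun R : ℝ => (R - a) / ‖z - R • e‖) atTop (nhds 1) := by
    have hs : Tendsto (fun R : ℝ => Real.sqrt ((R - a) ^ 2 / ‖z - R • e‖ ^ 2)) atTop
        (nhds 1) := by
      have h := (Real.continuous_sqrt.continuousAt (x := (1:ℝ))).tendsto.comp hclim
      simp only [Function.comp, Real.sqrt_one] at h
      exact h
    refine hs.congr' ?_
    filter_upwards [hnormpos] with R hR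
    rw [← div_pow, Real.sqrt_sq (div_nonneg (by linarith [hR.2.2]) hR.1.le)]
  have hpref : Tendsto (fun R : ℝ => ((R - a) / ‖z - R • e‖) ^ ((n : ℝ) - 2 * σ)) atTop
      (nhds 1) := by
    have h := hbase.rpow_const (p := (n : ℝ) - 2 * σ) (Or.inl one_ne_zero)
    simpa using h
  -- continuity of u at w
  have hu : Tendsto
      (fun R : ℝ => u (R • e + ((R - a) ^ 2 / ‖z - R • e‖ ^ 2) • (z - R • e))) atTop
      (nhds (u w)) := by
    have hcw : ContinuousAt u w := hc.continuousAt (isOpen_compl_singleton.mem_nhds hw0)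
    exact hcw.tendsto.comp hp_tendsto
  -- eventual moving-spheres inequality
  have hsq : ∀ᶠ R : ℝ in atTop, (R - a) ^ 2 ≤ ‖z - R • e‖ ^ 2 := by
    have hlin : Tendsto (fun R : ℝ => ‖z‖ ^ 2 - a ^ 2 + 2 * R * (a - t)) atTop atTop := by
      apply Filter.tendsto_atTop_add_const_left
      have h : Tendsto (fun R : ℝ => R * (2 * (a - t))) atTop atTop :=
        Tendsto.atTop_mul_const (by linarith) tendsto_id
      exact h.congr fun R => by ring
    filter_upwards [hlin.eventually_ge_atTop 0] with R hR
    rw [hD R]; nlinarith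
  have hev : ∀ᶠ R : ℝ in atTop,
      ((R - a) / ‖z - R • e‖) ^ ((n : ℝ) - 2 * σ) *
        u (R • e + ((R - a) ^ 2 / ‖z - R • e‖ ^ 2) • (z - R • e)) ≤ u z := by
    filter_upwards [hnormpos, hsq, eventually_gt_atTop (0:ℝ)] with R hR hRsq hR0
    obtain ⟨hN, hRe, hRa⟩ := hR
    have hx0 : R • e ≠ 0 := smul_ne_zero (ne_of_gt hR0) he0
    have hle : R - a ≤ ‖z - R • e‖ := by nlinarith [norm_nonneg (z - R • e)]
    exact hms (R • e) hx0 (R - a) hRa (by rw [hRe]; linarith) z hle hz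
  have hfin := le_of_tendsto (hpref.mul hu) hev
  simpa using hfin


section
variable {n : ℕ} (u : EuclideanSpace ℝ (Fin n) → ℝ)

lemma strict_mono_aux
    (refl : ∀ e : EuclideanSpace ℝ (Fin n), ‖e‖ = 1 → ∀ a : ℝ, 0 < a →
      ∀ z : EuclideanSpace ℝ (Fin n), z ≠ 0 → ⟪z, e⟫ < a →
        u (z - (2 * (⟪z, e⟫ - a)) • e) ≤ u z)
    (z w : EuclideanSpace ℝ (Fin n)) (hz : z ≠ 0) (hlt : ‖z‖ < ‖w‖) :
    u w ≤ u z := by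
  have hwz : w - z ≠ 0 := by
    intro h
    rw [sub_eq_zero] at h
    rw [h] at hlt; exact lt_irrefl _ hlt
  have hnorm : 0 < ‖w - z‖ := norm_pos_iff.mpr hwz
  set e : EuclideanSpace ℝ (Fin n) := ‖w - z‖⁻¹ • (w - z) with hedef
  have he : ‖e‖ = 1 := by
    rw [hedef, norm_smul, Real.norm_eq_abs, abs_of_nonneg (inv_nonneg.mpr hnorm.le),
      inv_mul_cancel₀ (ne_of_gt hnorm)]
  have hinner : ⟪z, e⟫ = (⟪z, w⟫ - ‖z‖ ^ 2) / ‖w - z‖ := by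
    rw [hedef, real_inner_smul_right, inner_sub_right, real_inner_self_eq_norm_sq]
    field_simp
  have hwz2 : ‖w - z‖ ^ 2 = ‖w‖ ^ 2 - 2 * ⟪w, z⟫ + ‖z‖ ^ 2 := norm_sub_sq_real w z
  set a : ℝ := (‖w‖ ^ 2 - ‖z‖ ^ 2) / (2 * ‖w - z‖) with hadef
  have ha : 0 < a := by
    apply div_pos _ (by positivity)
    nlinarith [norm_nonneg z, norm_nonneg w]
  have hkey : a - ⟪z, e⟫ = ‖w - z‖ / 2 := by
    rw [hadef, hinner]
    rw [div_sub_div _ _ (by positivity : (2:ℝ) * ‖w - z‖ ≠ 0) (ne_of_gt hnorm)]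
    rw [div_eq_div_iff (by positivity : (2:ℝ) * ‖w - z‖ * ‖w - z‖ ≠ 0) (by norm_num : (2:ℝ) ≠ 0)]
    have hzw : ⟪z, w⟫ = ⟪w, z⟫ := (real_inner_comm z w).symm
    nlinarith [hwz2, hzw]
  have hza : ⟪z, e⟫ < a := by linarith [hkey, hnorm]
  have := refl e he a ha z hz hza
  have hrefl : z - (2 * (⟪z, e⟫ - a)) • e = w := by
    have h2 : 2 * (⟪z, e⟫ - a) = -‖w - z‖ := by linarith [hkey]
    rw [h2, hedef, neg_smul, sub_neg_eq_add, smul_smul,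
      mul_inv_cancel₀ (ne_of_gt hnorm), one_smul, add_sub_cancel]
  rwa [hrefl] at this

end

section
variable {n : ℕ} (u : EuclideanSpace ℝ (Fin n) → ℝ)

lemma eq_norm_aux (hc : ContinuousOn u {(0 : EuclideanSpace ℝ (Fin n))}ᶜ)
    (strict : ∀ z w : EuclideanSpace ℝ (Fin n), z ≠ 0 → ‖z‖ < ‖w‖ → u w ≤ u z)
    (z w : EuclideanSpace ℝ (Fin n)) (hz : z ≠ 0) (hw : w ≠ 0) (hnorm : ‖z‖ = ‖w‖) :
    u w ≤ u z := by
  have hw' : (0:ℝ) < ‖w‖ := norm_pos_iff.mpr hw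
  have hlim : Filter.Tendsto (fun ε : ℝ => u ((1 + ε) • w)) (nhdsWithin 0 (Set.Ioi 0))
      (nhds (u w)) := by
    have h1 : Filter.Tendsto (fun ε : ℝ => (1 + ε) • w) (nhdsWithin 0 (Set.Ioi 0))
        (nhds w) := by
      have : Continuous (fun ε : ℝ => (1 + ε) • w) := by continuity
      have h2 : Filter.Tendsto (fun ε : ℝ => (1 + ε) • w) (nhdsWithin 0 (Set.Ioi 0))
          (nhds (((1:ℝ) + 0) • w)) := (this.tendsto 0).mono_left nhdsWithin_le_nhds
      simpa using h2
    have hcw : ContinuousAt u w := hc.continuousAt (isOpen_compl_singleton.mem_nhds hw)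
    exact hcw.tendsto.comp h1
  refine le_of_tendsto hlim ?_
  filter_upwards [self_mem_nhdsWithin] with ε (hε : ε ∈ Set.Ioi 0)
  apply strict z ((1 + ε) • w) hz
  rw [norm_smul, Real.norm_eq_abs, abs_of_pos (by linarith [Set.mem_Ioi.mp hε] : (0:ℝ) < 1 + ε),
    hnorm]
  nlinarith [Set.mem_Ioi.mp hε]

end

/-- From the moving-spheres property to reflection inequalities and radial symmetry:
a positive singular solution of the integral equation satisfying the moving-spheres
conclusion for all centers `x ≠ 0` and radii `0 < λ < |x|` satisfies
`u(z) ≥ u(z - 2(z·e - a)e)` whenever `|e| = 1`, `a > 0`, `z·e < a`, `z ≠ 0`;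
consequently `u` is radially symmetric about `0` and nonincreasing in `|x|`. -/
theorem moving_spheres_radial_symmetry (n : ℕ) (hn : 1 ≤ n) (σ α p : ℝ)
    (hσ : 0 < σ) (hσ2 : σ < (n : ℝ) / 2) (hα0 : 0 ≤ α) (hα : α < 2 * σ)
    (hp0 : 0 < p) (hp : p ≤ ((n : ℝ) + 2 * σ - 2 * α) / ((n : ℝ) - 2 * σ))
    (u : EuclideanSpace ℝ (Fin n) → ℝ)
    (hc : ContinuousOn u {(0 : EuclideanSpace ℝ (Fin n))}ᶜ)
    (hpos : ∀ x : EuclideanSpace ℝ (Fin n), x ≠ 0 → 0 < u x)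
    (heq : ∀ x : EuclideanSpace ℝ (Fin n), x ≠ 0 →
      u x = ∫ y, u y ^ p * ‖y‖ ^ (-α) * ‖x - y‖ ^ (-((n : ℝ) - 2 * σ)))
    (hms : ∀ x : EuclideanSpace ℝ (Fin n), x ≠ 0 → ∀ l : ℝ, 0 < l → l < ‖x‖ →
      ∀ y : EuclideanSpace ℝ (Fin n), l ≤ ‖y - x‖ → y ≠ 0 →
        (l / ‖y - x‖) ^ ((n : ℝ) - 2 * σ) *
          u (x + (l ^ 2 / ‖y - x‖ ^ 2) • (y - x)) ≤ u y) :
    (∀ e : EuclideanSpace ℝ (Fin n), ‖e‖ = 1 → ∀ a : ℝ, 0 < a →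
      ∀ z : EuclideanSpace ℝ (Fin n), z ≠ 0 → ⟪z, e⟫ < a →
        u (z - (2 * (⟪z, e⟫ - a)) • e) ≤ u z) ∧
    (∀ z w : EuclideanSpace ℝ (Fin n), z ≠ 0 → w ≠ 0 → ‖z‖ = ‖w‖ → u z = u w) ∧
    (∀ z w : EuclideanSpace ℝ (Fin n), z ≠ 0 → w ≠ 0 → ‖z‖ ≤ ‖w‖ → u w ≤ u z) := by
  have part1 : ∀ e : EuclideanSpace ℝ (Fin n), ‖e‖ = 1 → ∀ a : ℝ, 0 < a →
      ∀ z : EuclideanSpace ℝ (Fin n), z ≠ 0 → ⟪z, e⟫ < a →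
        u (z - (2 * (⟪z, e⟫ - a)) • e) ≤ u z :=
    fun e he a ha z hz hza => reflect_aux u hc hms e he a ha z hz hza
  have strict : ∀ z w : EuclideanSpace ℝ (Fin n), z ≠ 0 → ‖z‖ < ‖w‖ → u w ≤ u z :=
    fun z w hz hlt => strict_mono_aux u part1 z w hz hlt
  have part2 : ∀ z w : EuclideanSpace ℝ (Fin n), z ≠ 0 → w ≠ 0 → ‖z‖ = ‖w‖ →
      u z = u w := fun z w hz hw hn' =>
    le_antisymm (eq_norm_aux u hc strict w z hw hz hn'.symm)
      (eq_norm_aux u hc strict z w hz hw hn')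
  refine ⟨part1, part2, fun z w hz hw hle => ?_⟩
  rcases hle.lt_or_eq with hlt | heq'
  · exact strict z w hz hlt
  · exact (part2 z w hz hw heq').ge
end AuxLemmas
end

section
/- Let n ≥ 1, σ ∈ (0, n/2), and let u : ℝⁿ \ {0} → [0, ∞) be measurable. Define v(x) = |x|^{-(n-2σ)} u(x/|x|²) for x ≠ 0. If u satisfies u(x) = ∫_{ℝⁿ} u(y)^p |y|^{-α} |x - y|^{-(n-2σ)} dy for all x ≠ 0 (with the integral finite), then v satisfies v(x) = ∫_{ℝⁿ} v(y)^p |y|^{-θ} |x - y|^{-(n-2σ)} dy for all x ≠ 0, where θ = n + 2σ - α - p(n - 2σ). -/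
open MeasureTheory EuclideanGeometry Module Set

namespace KelvinAux

variable (n : ℕ)

noncomputable def phi (y : EuclideanSpace ℝ (Fin n)) : EuclideanSpace ℝ (Fin n) :=
  (1 / ‖y‖ ^ 2) • y

lemma phi_eq_inversion : phi n = inversion (0 : EuclideanSpace ℝ (Fin n)) 1 := by
  funext y
  simp [phi, inversion, dist_eq_norm, div_pow]

lemma norm_phi {y : EuclideanSpace ℝ (Fin n)} (hy : y ≠ 0) : ‖phi n y‖ = ‖y‖⁻¹ := by
  have h : ‖y‖ ≠ 0 := norm_ne_zero_iff.2 hy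
  rw [phi, norm_smul, Real.norm_eq_abs, abs_of_nonneg (by positivity)]
  field_simp

lemma phi_ne_zero {y : EuclideanSpace ℝ (Fin n)} (hy : y ≠ 0) : phi n y ≠ 0 := by
  have : ‖phi n y‖ ≠ 0 := by rw [norm_phi n hy]; simpa using norm_ne_zero_iff.2 hy
  simpa [norm_ne_zero_iff] using this

lemma phi_phi {y : EuclideanSpace ℝ (Fin n)} (hy : y ≠ 0) : phi n (phi n y) = y := by
  have h : ‖y‖ ≠ 0 := norm_ne_zero_iff.2 hy
  rw [phi, norm_phi n hy, phi, smul_smul]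
  rw [show (1 / (‖y‖⁻¹) ^ 2) * (1 / ‖y‖ ^ 2) = 1 by field_simp]
  simp

lemma phi_image : phi n '' ({0}ᶜ : Set (EuclideanSpace ℝ (Fin n))) = {0}ᶜ := by
  ext z
  simp only [mem_image, mem_compl_iff, mem_singleton_iff]
  constructor
  · rintro ⟨y, hy, rfl⟩; exact phi_ne_zero n hy
  · intro hz; exact ⟨phi n z, phi_ne_zero n hz, phi_phi n hz⟩

lemma phi_injOn : InjOn (phi n) ({0}ᶜ : Set (EuclideanSpace ℝ (Fin n))) := by
  intro a ha b hb hab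
  rw [← phi_phi n ha, ← phi_phi n hb, hab]

lemma phi_hasFDerivAt {z : EuclideanSpace ℝ (Fin n)} (hz : z ≠ 0) :
    HasFDerivAt (phi n)
      ((1 / ‖z‖) ^ 2 • ((ℝ ∙ z)ᗮ.reflection :
        EuclideanSpace ℝ (Fin n) →L[ℝ] EuclideanSpace ℝ (Fin n))) z := by
  rw [phi_eq_inversion]
  have := hasFDerivAt_inversion (c := (0 : EuclideanSpace ℝ (Fin n))) (R := 1) (x := z)
    (by simpa using hz)
  simpa [dist_eq_norm] using this

lemma phi_det {z : EuclideanSpace ℝ (Fin n)} (hz : z ≠ 0) :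
    |(((1 / ‖z‖) ^ 2 • ((ℝ ∙ z)ᗮ.reflection :
        EuclideanSpace ℝ (Fin n) →L[ℝ] EuclideanSpace ℝ (Fin n))).det)| =
      ((‖z‖ ^ 2)⁻¹) ^ n := by
  have h1 : finrank ℝ ((ℝ ∙ z)ᗮᗮ : Submodule ℝ (EuclideanSpace ℝ (Fin n))) = 1 := by
    rw [Submodule.orthogonal_orthogonal]
    exact finrank_span_singleton hz
  rw [ContinuousLinearMap.det, ContinuousLinearMap.coe_smul, LinearMap.det_smul]
  have h2 : (((ℝ ∙ z)ᗮ.reflection : EuclideanSpace ℝ (Fin n) →L[ℝ] EuclideanSpace ℝ (Fin n)) :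
      EuclideanSpace ℝ (Fin n) →ₗ[ℝ] EuclideanSpace ℝ (Fin n)) =
      ((ℝ ∙ z)ᗮ.reflection).toLinearMap := rfl
  rw [h2, Submodule.det_reflection, h1, finrank_euclideanSpace_fin]
  rw [abs_mul, abs_pow, abs_pow]
  have hz' : (0:ℝ) < ‖z‖ := norm_pos_iff.2 hz
  rw [abs_of_nonneg (by positivity : (0:ℝ) ≤ 1 / ‖z‖)]
  simp [div_pow, one_div]

lemma norm_phi_sub {x z : EuclideanSpace ℝ (Fin n)} (hx : x ≠ 0) (hz : z ≠ 0) :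
    ‖phi n x - phi n z‖ = ‖x - z‖ / (‖x‖ * ‖z‖) := by
  have h := dist_div_norm_sq_smul hx hz (1 : ℝ)
  simp only [dist_eq_norm] at h
  have e : ∀ y : EuclideanSpace ℝ (Fin n), ((1:ℝ) / ‖y‖) ^ 2 • y = phi n y := by
    intro y; rw [phi, div_pow, one_pow]
  rw [e, e] at h
  rw [h, one_pow]
  ring

lemma alg (r R d U t α θ p : ℝ) (hr : 0 < r) (hR : 0 < R) (hd : 0 ≤ d) (hU : 0 ≤ U)
    (hθ : -(t * p) + -θ = (-(2 * (n:ℝ)) + α) + t) :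
    R ^ (-t) * (((r ^ 2)⁻¹) ^ n * (U ^ p * (r⁻¹) ^ (-α) * (d / (R * r)) ^ (-t)))
      = (r ^ (-t) * U) ^ p * r ^ (-θ) * d ^ (-t) := by
  have e1 : ((r ^ 2)⁻¹ : ℝ) ^ n = r ^ (-(2 * (n:ℝ))) := by
    rw [← Real.rpow_natCast ((r ^ 2)⁻¹) n, ← Real.rpow_natCast r 2,
      ← Real.rpow_neg hr.le, ← Real.rpow_mul hr.le]
    norm_num
  rw [e1, Real.inv_rpow hr.le, ← Real.rpow_neg hr.le, neg_neg,
    Real.div_rpow hd (by positivity), Real.mul_rpow hR.le hr.le, div_eq_mul_inv, mul_inv,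
    ← Real.rpow_neg hR.le, ← Real.rpow_neg hr.le, neg_neg,
    Real.mul_rpow (Real.rpow_nonneg hr.le _) hU, ← Real.rpow_mul hr.le]
  have l1 : R ^ (-t) * (r ^ (-(2 * (n:ℝ))) * (U ^ p * r ^ α * (d ^ (-t) * (R ^ t * r ^ t))))
      = (R ^ (-t) * R ^ t) * ((r ^ (-(2 * (n:ℝ))) * r ^ α) * r ^ t) * (U ^ p * d ^ (-t)) := by
    ring
  rw [l1, ← Real.rpow_add hR, ← Real.rpow_add hr, ← Real.rpow_add hr, neg_add_cancel,
    Real.rpow_zero, one_mul]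
  have l2 : r ^ (-t * p) * U ^ p * r ^ (-θ) * d ^ (-t)
      = (r ^ (-t * p) * r ^ (-θ)) * (U ^ p * d ^ (-t)) := by ring
  rw [l2, ← Real.rpow_add hr]
  congr 2
  linarith

end KelvinAux

open KelvinAux

/-- The Kelvin transform `v(x) = |x|^{-(n-2σ)} u(x/|x|²)` of a solution of
`u(x) = ∫ u(y)^p |y|^{-α} |x-y|^{-(n-2σ)} dy` solves the same equation with weight
exponent `θ = n + 2σ - α - p(n-2σ)`. -/
theorem kelvin_transform_integral_equation (n : ℕ) (hn : 1 ≤ n) (σ α p : ℝ)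
    (hσ : 0 < σ) (hσ2 : σ < (n : ℝ) / 2)
    (u : EuclideanSpace ℝ (Fin n) → ℝ) (hm : Measurable u) (hnn : ∀ x, 0 ≤ u x)
    (heq : ∀ x : EuclideanSpace ℝ (Fin n), x ≠ 0 →
      Integrable (fun y => u y ^ p * ‖y‖ ^ (-α) * ‖x - y‖ ^ (-((n : ℝ) - 2 * σ))) ∧
      u x = ∫ y, u y ^ p * ‖y‖ ^ (-α) * ‖x - y‖ ^ (-((n : ℝ) - 2 * σ))) :
    ∀ x : EuclideanSpace ℝ (Fin n), x ≠ 0 →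
      ‖x‖ ^ (-((n : ℝ) - 2 * σ)) * u ((1 / ‖x‖ ^ 2) • x) =
        ∫ y, (‖y‖ ^ (-((n : ℝ) - 2 * σ)) * u ((1 / ‖y‖ ^ 2) • y)) ^ p *
          ‖y‖ ^ (-((n : ℝ) + 2 * σ - α - p * ((n : ℝ) - 2 * σ))) *
          ‖x - y‖ ^ (-((n : ℝ) - 2 * σ)) := by
  intro x hx
  have hne : Nonempty (Fin n) := ⟨⟨0, hn⟩⟩
  haveI : Nontrivial (EuclideanSpace ℝ (Fin n)) := inferInstance
  have hφx : phi n x ≠ 0 := phi_ne_zero n hx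
  obtain ⟨-, hEq⟩ := heq (phi n x) hφx
  have hs : MeasurableSet ({0}ᶜ : Set (EuclideanSpace ℝ (Fin n))) :=
    (measurableSet_singleton 0).compl
  -- change of variables
  have hCoV := integral_image_eq_integral_abs_det_fderiv_smul volume hs
    (fun z hz => (phi_hasFDerivAt n hz).hasFDerivWithinAt) (phi_injOn n)
    (fun y => u y ^ p * ‖y‖ ^ (-α) * ‖phi n x - y‖ ^ (-((n : ℝ) - 2 * σ)))
  rw [phi_image] at hCoV
  have hrestrict : (volume : Measure (EuclideanSpace ℝ (Fin n))).restrict ({0}ᶜ) = volume :=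
    MeasureTheory.restrict_compl_singleton 0
  have hphidef : ∀ y : EuclideanSpace ℝ (Fin n), (1 / ‖y‖ ^ 2 : ℝ) • y = phi n y := fun y => rfl
  simp only [hphidef]
  -- rewrite the goal RHS
  have key : ∀ z : EuclideanSpace ℝ (Fin n), z ∈ ({0}ᶜ : Set (EuclideanSpace ℝ (Fin n))) →
      ((‖z‖ ^ (-((n : ℝ) - 2 * σ)) * u (phi n z)) ^ p *
          ‖z‖ ^ (-((n : ℝ) + 2 * σ - α - p * ((n : ℝ) - 2 * σ))) *
          ‖x - z‖ ^ (-((n : ℝ) - 2 * σ)))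
        = ‖x‖ ^ (-((n : ℝ) - 2 * σ)) *
            (|(((1 / ‖z‖) ^ 2 • ((ℝ ∙ z)ᗮ.reflection :
              EuclideanSpace ℝ (Fin n) →L[ℝ] EuclideanSpace ℝ (Fin n))).det)| •
            (u (phi n z) ^ p * ‖phi n z‖ ^ (-α) *
              ‖phi n x - phi n z‖ ^ (-((n : ℝ) - 2 * σ)))) := by
    intro z hz
    rw [mem_compl_iff, mem_singleton_iff] at hz
    rw [phi_det n hz, smul_eq_mul, norm_phi n hz, norm_phi_sub n hx hz]
    have hr : (0:ℝ) < ‖z‖ := norm_pos_iff.2 hz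
    have hR : (0:ℝ) < ‖x‖ := norm_pos_iff.2 hx
    rw [← alg n ‖z‖ ‖x‖ ‖x - z‖ (u (phi n z)) ((n : ℝ) - 2 * σ) α
      ((n : ℝ) + 2 * σ - α - p * ((n : ℝ) - 2 * σ)) p hr hR (norm_nonneg _) (hnn _)
      (by push_cast; ring)]
  symm
  calc ∫ y, (‖y‖ ^ (-((n : ℝ) - 2 * σ)) * u (phi n y)) ^ p *
          ‖y‖ ^ (-((n : ℝ) + 2 * σ - α - p * ((n : ℝ) - 2 * σ))) *
          ‖x - y‖ ^ (-((n : ℝ) - 2 * σ))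
      = ∫ y in ({0}ᶜ : Set (EuclideanSpace ℝ (Fin n))),
          (‖y‖ ^ (-((n : ℝ) - 2 * σ)) * u (phi n y)) ^ p *
          ‖y‖ ^ (-((n : ℝ) + 2 * σ - α - p * ((n : ℝ) - 2 * σ))) *
          ‖x - y‖ ^ (-((n : ℝ) - 2 * σ)) := by rw [hrestrict]
    _ = ∫ z in ({0}ᶜ : Set (EuclideanSpace ℝ (Fin n))),
          ‖x‖ ^ (-((n : ℝ) - 2 * σ)) *
            (|(((1 / ‖z‖) ^ 2 • ((ℝ ∙ z)ᗮ.reflection :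
              EuclideanSpace ℝ (Fin n) →L[ℝ] EuclideanSpace ℝ (Fin n))).det)| •
            (u (phi n z) ^ p * ‖phi n z‖ ^ (-α) *
              ‖phi n x - phi n z‖ ^ (-((n : ℝ) - 2 * σ)))) :=
        setIntegral_congr_fun hs key
    _ = ‖x‖ ^ (-((n : ℝ) - 2 * σ)) *
          ∫ z in ({0}ᶜ : Set (EuclideanSpace ℝ (Fin n))),
            |(((1 / ‖z‖) ^ 2 • ((ℝ ∙ z)ᗮ.reflection :
              EuclideanSpace ℝ (Fin n) →L[ℝ] EuclideanSpace ℝ (Fin n))).det)| •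
            (u (phi n z) ^ p * ‖phi n z‖ ^ (-α) *
              ‖phi n x - phi n z‖ ^ (-((n : ℝ) - 2 * σ))) := integral_const_mul _ _
    _ = ‖x‖ ^ (-((n : ℝ) - 2 * σ)) *
          ∫ y in ({0}ᶜ : Set (EuclideanSpace ℝ (Fin n))),
            u y ^ p * ‖y‖ ^ (-α) * ‖phi n x - y‖ ^ (-((n : ℝ) - 2 * σ)) := by rw [hCoV]
    _ = ‖x‖ ^ (-((n : ℝ) - 2 * σ)) * u (phi n x) := by rw [hrestrict, ← hEq]
end
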